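/- arXiv:math/0312124 — 2 statements merged into one kernel-verified Lean document; each statement's English description precedes it below -/
import Mathlib

section
/- Let k be a field of characteristic 2 and let h_n be the (2n+1)-dimensional Heisenberg Lie algebra over k. Then the generating function of the Betti numbers of the Lie algebra homology of h_n with trivial coefficients satisfies the polynomial identity (1 + t^2) * (Σ_{i ≥ 0} dim_k H_i(h_n; k) · t^i) = (1 + t^3)(1 + t)^{2n} + (t + t^2)(2t)^n, equivalently Σ_{i ≥ 0} dim_k H_i(h_n; k) · t^i = ((1 + t^3)(1 + t)^{2n} + (t + t^2)(2t)^n)/(1 + t^2). -/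
open Polynomial

/-- Index of the standard monomial basis of the exterior algebra `Λ^• h_n` of the
`(2n+1)`-dimensional Heisenberg Lie algebra with basis `z, x_1, …, x_n, y_1, …, y_n`:
the monomial `z^ε ∧ x_I ∧ y_J` (with `I`, `J` in increasing order) is encoded as
`(ε, I, J)`. -/
abbrev HeisIdx (n : ℕ) := Bool × Finset (Fin n) × Finset (Fin n)

/-- Homological degree of a basis monomial: `deg (z^ε ∧ x_I ∧ y_J) = ε + |I| + |J|`. -/
def heisDeg {n : ℕ} (p : HeisIdx n) : ℕ :=
  (if p.1 then 1 else 0) + p.2.1.card + p.2.2.card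

/-- `Λ^• h_n` as the `k`-vector space with basis the monomials `z^ε ∧ x_I ∧ y_J`. -/
abbrev HeisCE (k : Type*) [Field k] (n : ℕ) := HeisIdx n → k

variable (k : Type*) [Field k]

/-- Image of a basis monomial under the Chevalley–Eilenberg differential
`d(w_1 ∧ ⋯ ∧ w_p) = Σ_{i<j} (-1)^{i+j} [w_i,w_j] ∧ w_1 ∧ ⋯ ŵ_i ⋯ ŵ_j ⋯ ∧ w_p`
of the Heisenberg Lie algebra, whose only nonzero brackets on basis vectors are
`[x_i, y_i] = -[y_i, x_i] = z`.  Explicitly `d(z ∧ x_I ∧ y_J) = 0` and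
`d(x_I ∧ y_J) = Σ_{t ∈ I∩J} (-1)^{a_t + |I| + b_t} z ∧ x_{I∖t} ∧ y_{J∖t}`, where
`a_t`, `b_t` are the positions (ranks) of `t` in `I` resp. `J`. -/
noncomputable def heisDAux (n : ℕ) (p : HeisIdx n) : HeisCE k n :=
  if p.1 then 0 else
    ∑ t ∈ p.2.1 ∩ p.2.2,
      ((-1 : k) ^ ((p.2.1.filter (· ≤ t)).card + p.2.1.card +
          (p.2.2.filter (· ≤ t)).card)) •
        (Pi.single (true, p.2.1.erase t, p.2.2.erase t) (1 : k) : HeisCE k n)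

/-- The Chevalley–Eilenberg differential of the Heisenberg Lie algebra, as the linear
map determined on the standard exterior basis by `heisDAux`. -/
noncomputable def heisD (n : ℕ) : HeisCE k n →ₗ[k] HeisCE k n :=
  ∑ p : HeisIdx n, (LinearMap.proj p).smulRight (heisDAux k n p)

/-- The degree-`i` part `Λ^i h_n`: the subspace spanned by the monomials of degree `i`. -/
def heisChains (n i : ℕ) : Submodule k (HeisCE k n) where
  carrier := {f | ∀ p : HeisIdx n, heisDeg p ≠ i → f p = 0}
  add_mem' hf hg p hp := by simp [hf p hp, hg p hp]
  zero_mem' p _ := rfl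
  smul_mem' c f hf p hp := by simp [hf p hp]

/-- The `i`-cycles: the kernel of `d : Λ^i h_n → Λ^{i-1} h_n`. -/
noncomputable def heisCycles (n i : ℕ) : Submodule k (HeisCE k n) :=
  LinearMap.ker (heisD k n) ⊓ heisChains k n i

/-- The `i`-boundaries: the image of `d : Λ^{i+1} h_n → Λ^i h_n`. -/
noncomputable def heisBoundaries (n i : ℕ) : Submodule k (HeisCE k n) :=
  Submodule.map (heisD k n) (heisChains k n (i + 1))

/-- The `i`-th Lie algebra homology `H_i(h_n; k)` of the Heisenberg Lie algebra with
trivial coefficients: cycles modulo boundaries in the Chevalley–Eilenberg complex. -/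
noncomputable def HeisHomology (n i : ℕ) :=
  heisCycles k n i ⧸
    Submodule.comap (heisCycles k n i).subtype (heisBoundaries k n i)

noncomputable instance (n i : ℕ) : AddCommGroup (HeisHomology k n i) :=
  inferInstanceAs (AddCommGroup (_ ⧸ _))

noncomputable instance (n i : ℕ) : Module k (HeisHomology k n i) :=
  inferInstanceAs (Module k (_ ⧸ _))

namespace HeisAux

variable {k : Type*} [Field k] {n : ℕ}

/-- standard basis vector -/
noncomputable def eb (p : HeisIdx n) : HeisCE k n := Pi.single p 1

lemma heisD_apply (f : HeisCE k n) : heisD k n f = ∑ p : HeisIdx n, f p • heisDAux k n p := by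
  simp [heisD, LinearMap.sum_apply]

lemma heisD_eb (p : HeisIdx n) : heisD k n (eb p) = heisDAux k n p := by
  rw [heisD_apply]
  rw [Finset.sum_eq_single p]
  · simp [eb]
  · intro q _ hq
    simp [eb, Pi.single_apply, hq]
  · simp

lemma heisDAux_true (p : HeisIdx n) (hp : p.1 = true) : heisDAux k n p = 0 := by
  simp [heisDAux, hp]

lemma heisDAux_false (I J : Finset (Fin n)) :
    heisDAux k n (false, I, J) =
      ∑ t ∈ I ∩ J,
        ((-1 : k) ^ ((I.filter (· ≤ t)).card + I.card + (J.filter (· ≤ t)).card)) •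
          eb (true, I.erase t, J.erase t) := by
  simp [heisDAux, eb]

lemma heisDAux_char2 [CharP k 2] (I J : Finset (Fin n)) :
    heisDAux k n (false, I, J) = ∑ t ∈ I ∩ J, eb (true, I.erase t, J.erase t) := by
  rw [heisDAux_false]
  refine Finset.sum_congr rfl fun t _ => ?_
  rw [CharTwo.neg_eq (1 : k), one_pow, one_smul]

lemma heisDAux_apply_false (p q : HeisIdx n) (hq : q.1 = false) : heisDAux k n p q = 0 := by
  rcases p with ⟨ε, I, J⟩
  cases ε
  · rw [show ((false, I, J) : HeisIdx n) = (false, I, J) from rfl, heisDAux]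
    simp only [Bool.false_eq_true, if_false, Finset.sum_apply, Pi.smul_apply]
    refine Finset.sum_eq_zero fun t _ => ?_
    rw [Pi.single_apply, if_neg, smul_zero]
    rintro rfl
    simp at hq
  · rw [heisDAux_true _ rfl]; rfl

lemma heisD_heisD (f : HeisCE k n) : heisD k n (heisD k n f) = 0 := by
  rw [heisD_apply (heisD k n f)]
  refine Finset.sum_eq_zero fun p _ => ?_
  rcases p with ⟨ε, I, J⟩
  cases ε
  · rw [heisD_apply f]
    simp only [Finset.sum_apply, Pi.smul_apply]
    rw [Finset.sum_eq_zero, zero_smul]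
    intro q _
    rw [heisDAux_apply_false q _ rfl, smul_zero]
  · rw [heisDAux_true _ rfl, smul_zero]

end HeisAux
namespace HeisAux

variable {k : Type*} [Field k] {n : ℕ}

lemma heisDAux_apply_ne (p q : HeisIdx n) (h : heisDeg q + 1 ≠ heisDeg p) :
    heisDAux k n p q = 0 := by
  rcases p with ⟨ε, I, J⟩
  cases ε
  · rw [heisDAux]
    simp only [Bool.false_eq_true, if_false, Finset.sum_apply, Pi.smul_apply]
    refine Finset.sum_eq_zero fun t ht => ?_
    rw [Finset.mem_inter] at ht
    rw [Pi.single_apply, if_neg, smul_zero]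
    rintro rfl
    apply h
    have h1 : 1 ≤ I.card := Finset.card_pos.2 ⟨t, ht.1⟩
    have h2 : 1 ≤ J.card := Finset.card_pos.2 ⟨t, ht.2⟩
    simp only [heisDeg, Finset.card_erase_of_mem ht.1, Finset.card_erase_of_mem ht.2]
    simp only [Bool.false_eq_true, if_false, if_true]
    omega
  · rw [heisDAux_true _ rfl]; rfl

lemma heisD_mem_chains {f : HeisCE k n} {i : ℕ} (hf : f ∈ heisChains k n (i + 1)) :
    heisD k n f ∈ heisChains k n i := by
  intro q hq
  rw [heisD_apply]
  simp only [Finset.sum_apply, Pi.smul_apply]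
  refine Finset.sum_eq_zero fun p _ => ?_
  by_cases hp : heisDeg p = i + 1
  · rw [heisDAux_apply_ne p q (by omega), smul_zero]
  · rw [hf p hp, zero_smul]

lemma eb_expansion (f : HeisCE k n) : f = ∑ p : HeisIdx n, f p • eb p := by
  funext q
  simp [eb, Pi.single_apply, Finset.sum_ite_eq]

lemma eb_mem_chains {p : HeisIdx n} {i : ℕ} (hp : heisDeg p = i) :
    eb p ∈ heisChains k n i := by
  intro q hq
  rw [eb, Pi.single_apply, if_neg]
  rintro rfl; exact hq hp

lemma mem_chains_expansion {f : HeisCE k n} {i : ℕ} (hf : f ∈ heisChains k n i) :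
    f = ∑ p ∈ Finset.univ.filter (fun p : HeisIdx n => heisDeg p = i), f p • eb p := by
  conv_lhs => rw [eb_expansion f]
  rw [Finset.sum_filter]
  refine Finset.sum_congr rfl fun p _ => ?_
  by_cases hp : heisDeg p = i
  · rw [if_pos hp]
  · rw [if_neg hp, hf p hp, zero_smul]

lemma heisChains_eq_span (i : ℕ) :
    heisChains k n i =
      Submodule.span k (eb '' {p : HeisIdx n | heisDeg p = i}) := by
  apply le_antisymm
  · intro f hf
    rw [mem_chains_expansion hf]
    refine Submodule.sum_smul_mem _ _ fun p hp => Submodule.subset_span ?_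
    exact ⟨p, (Finset.mem_filter.1 hp).2, rfl⟩
  · rw [Submodule.span_le]
    rintro g ⟨p, hp, rfl⟩
    exact eb_mem_chains hp

/-- chains ≃ functions on the degree-`i` subtype -/
noncomputable def chainsEquiv (i : ℕ) :
    heisChains k n i ≃ₗ[k] ({p : HeisIdx n // heisDeg p = i} → k) where
  toFun f := fun s => f.1 s.1
  map_add' f g := rfl
  map_smul' c f := rfl
  invFun g := ⟨fun p => if h : heisDeg p = i then g ⟨p, h⟩ else 0, by
    intro p hp; simp only []; rw [dif_neg hp]⟩
  left_inv f := by
    ext p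
    by_cases hp : heisDeg p = i
    · simp [dif_pos hp]
    · simp only [dif_neg hp]
      exact (f.2 p hp).symm
  right_inv g := by
    ext s
    simp [dif_pos s.2]

lemma finrank_chains (i : ℕ) :
    Module.finrank k (heisChains k n i) =
      (Finset.univ.filter (fun p : HeisIdx n => heisDeg p = i)).card := by
  rw [(chainsEquiv i).finrank_eq, Module.finrank_pi, Fintype.card_subtype]

end HeisAux
namespace HeisAux

variable {k : Type*} [Field k] {n : ℕ}

/-- the "block" invariant `M = (I Δ J)ᶜ = (I ∩ J) ∪ (I ∪ J)ᶜ` -/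
def Mset (I J : Finset (Fin n)) : Finset (Fin n) := (I ∩ J) ∪ (I ∪ J)ᶜ

lemma Mset_erase {I J : Finset (Fin n)} {t : Fin n} (ht : t ∈ I ∩ J) :
    Mset (I.erase t) (J.erase t) = Mset I J := by
  rw [Finset.mem_inter] at ht
  ext a
  by_cases ha : a = t
  · subst ha
    simp [Mset, ht.1, ht.2]
  · simp [Mset, Finset.mem_erase, ha]

lemma Mset_insert {I J : Finset (Fin n)} {t : Fin n} (ht : t ∉ I ∪ J) :
    Mset (insert t I) (insert t J) = Mset I J := by
  rw [Finset.mem_union] at ht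
  push_neg at ht
  ext a
  by_cases ha : a = t
  · subst ha
    simp [Mset, ht.1, ht.2]
  · simp [Mset, Finset.mem_insert, ha]

/-- "good" pairs: the minimum of `M` lies in `I ∩ J`. -/
def good (q : Finset (Fin n) × Finset (Fin n)) : Prop :=
  ∃ t ∈ q.1 ∩ q.2, (Mset q.1 q.2).min = (t : WithTop (Fin n))

instance : DecidablePred (good (n := n)) := fun _ => inferInstanceAs (Decidable (∃ _ ∈ _, _))

/-- value of the contracting homotopy on a basis element -/
noncomputable def sigAux (k : Type*) [Field k] {n : ℕ} (p : HeisIdx n) : HeisCE k n :=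
  if p.1 = true then
    ∑ t ∈ (p.2.1 ∪ p.2.2)ᶜ,
      (if (Mset p.2.1 p.2.2).min = (t : WithTop (Fin n)) then
        eb (false, insert t p.2.1, insert t p.2.2) else 0)
  else 0

/-- the contracting homotopy -/
noncomputable def sigMap (k : Type*) [Field k] (n : ℕ) : HeisCE k n →ₗ[k] HeisCE k n :=
  ∑ p : HeisIdx n, (LinearMap.proj p).smulRight (sigAux k p)

lemma sigMap_apply (f : HeisCE k n) : sigMap k n f = ∑ p : HeisIdx n, f p • sigAux k p := by
  simp [sigMap, LinearMap.sum_apply]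

lemma sigMap_eb (p : HeisIdx n) : sigMap k n (eb p) = sigAux k p := by
  rw [sigMap_apply, Finset.sum_eq_single p]
  · simp [eb]
  · intro q _ hq
    simp [eb, Pi.single_apply, hq]
  · simp

lemma sigMap_heisDAux_of_good [CharP k 2] {I J : Finset (Fin n)} (h : good (I, J)) :
    sigMap k n (heisDAux k n (false, I, J)) = eb (false, I, J) := by
  obtain ⟨t₀, ht₀K, ht₀min⟩ := h
  rw [Finset.mem_inter] at ht₀K
  rw [heisDAux_char2, map_sum]
  have hMt : ∀ t ∈ I ∩ J, Mset (I.erase t) (J.erase t) = Mset I J := fun t ht => Mset_erase ht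
  rw [Finset.sum_eq_single t₀]
  · rw [sigMap_eb, sigAux]
    simp only [if_pos rfl]
    rw [Finset.sum_eq_single t₀]
    · rw [hMt t₀ (Finset.mem_inter.2 ht₀K), if_pos ht₀min]
      simp [Finset.insert_erase ht₀K.1, Finset.insert_erase ht₀K.2]
    · intro u _ hu
      rw [hMt t₀ (Finset.mem_inter.2 ht₀K), if_neg, ]
      rw [ht₀min]
      exact fun he => hu (by exact_mod_cast he.symm)
    · intro hmem
      exfalso
      apply hmem
      simp [Finset.mem_compl, Finset.mem_union, Finset.mem_erase]
  · intro t ht htne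
    rw [sigMap_eb, sigAux]
    simp only [if_pos rfl]
    refine Finset.sum_eq_zero fun u hu => ?_
    rw [hMt t ht, if_neg]
    rw [ht₀min]
    intro he
    have : u = t₀ := by exact_mod_cast he.symm
    subst this
    rw [Finset.mem_compl, Finset.mem_union] at hu
    push_neg at hu
    exact hu.1 (Finset.mem_erase.2 ⟨Ne.symm htne, ht₀K.1⟩)
  · intro hmem
    exfalso
    exact hmem (Finset.mem_inter.2 ht₀K)

end HeisAux
namespace HeisAux

variable {k : Type*} [Field k] {n : ℕ}

lemma add_self_module [CharP k 2] {M : Type*} [AddCommGroup M] [Module k M] (x : M) :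
    x + x = 0 := by
  have : ((2 : k)) • x = 0 := by
    rw [show ((2 : k)) = 0 from CharTwo.two_eq_zero, zero_smul]
  rwa [two_smul] at this

lemma sum_sym_pairs_eq_zero [CharP k 2] {M : Type*} [AddCommGroup M] [Module k M]
    {α : Type*} [DecidableEq α] (s : Finset α) (F : α → α → M)
    (hsym : ∀ t u, F t u = F u t) :
    ∑ t ∈ s, ∑ u ∈ s.erase t, F t u = 0 := by
  have key : ∀ t ∈ s, ∑ u ∈ s.erase t, F t u =
      ∑ u ∈ s, (if t = u then 0 else F t u) := by
    intro t ht
    rw [← Finset.sum_erase s (f := fun u => if t = u then (0 : M) else F t u) (a := t) (by simp)]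
    refine Finset.sum_congr rfl fun u hu => ?_
    rw [if_neg fun h => (Finset.mem_erase.1 hu).1 h.symm]
  rw [Finset.sum_congr rfl key, ← Finset.sum_product']
  refine Finset.sum_involution (fun p _ => (p.2, p.1)) ?_ ?_ ?_ ?_
  · intro p _
    by_cases h : p.1 = p.2
    · simp [h]
    · rw [if_neg h, if_neg (Ne.symm h), hsym p.2 p.1]
      exact add_self_module (k := k) _
  · intro p _ hne
    intro h
    apply hne
    have h1 : p.2 = p.1 := congrArg Prod.fst h
    rw [if_pos h1.symm]
  · intro p hp
    rw [Finset.mem_product] at hp ⊢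
    exact ⟨hp.2, hp.1⟩
  · intro p _
    rfl

lemma insert_inter_insert {I J : Finset (Fin n)} {t t₀ : Fin n} :
    insert t₀ (I.erase t) ∩ insert t₀ (J.erase t) = insert t₀ ((I ∩ J).erase t) := by
  ext a
  by_cases ha : a = t₀
  · simp [ha]
  · simp [Finset.mem_insert, Finset.mem_erase, ha]
    tauto

/-- the key char-2 spanning identity -/
lemma heisDAux_eq_sum [CharP k 2] {I J : Finset (Fin n)} {t₀ : Fin n}
    (ht₀ : t₀ ∉ I ∪ J) :
    heisDAux k n (false, I, J) =
      ∑ t ∈ I ∩ J, heisDAux k n (false, insert t₀ (I.erase t), insert t₀ (J.erase t)) := by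
  rw [Finset.mem_union] at ht₀
  push_neg at ht₀
  have ht₀K : t₀ ∉ I ∩ J := fun h => ht₀.1 (Finset.mem_inter.1 h).1
  have step : ∀ t ∈ I ∩ J,
      heisDAux k n (false, insert t₀ (I.erase t), insert t₀ (J.erase t)) =
        eb (true, I.erase t, J.erase t) +
          ∑ u ∈ (I ∩ J).erase t,
            eb (true, insert t₀ ((I.erase t).erase u), insert t₀ ((J.erase t).erase u)) := by
    intro t ht
    rw [Finset.mem_inter] at ht
    rw [heisDAux_char2, insert_inter_insert,
      Finset.sum_insert (fun h => ht₀K (Finset.mem_of_mem_erase h))]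
    congr 1
    · rw [Finset.erase_insert, Finset.erase_insert]
      · simp [Finset.mem_erase, ht₀.2]
      · simp [Finset.mem_erase, ht₀.1]
    · refine Finset.sum_congr rfl fun u hu => ?_
      have hut₀ : u ≠ t₀ := fun h => ht₀K (h ▸ Finset.mem_of_mem_erase hu)
      rw [Finset.erase_insert_of_ne hut₀.symm, Finset.erase_insert_of_ne hut₀.symm]
  rw [Finset.sum_congr rfl step, Finset.sum_add_distrib, ← heisDAux_char2]
  have hzero : ∑ t ∈ I ∩ J, ∑ u ∈ (I ∩ J).erase t,
      eb (k := k) (true, insert t₀ ((I.erase t).erase u), insert t₀ ((J.erase t).erase u)) = 0 := by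
    refine sum_sym_pairs_eq_zero (k := k) (I ∩ J) _ fun t u => ?_
    rw [Finset.erase_right_comm, Finset.erase_right_comm (a := t)]
  rw [hzero, add_zero]

end HeisAux
namespace HeisAux

variable {k : Type*} [Field k] {n : ℕ}

/-- good pairs of total size `i` -/
def QSet (n i : ℕ) : Finset (Finset (Fin n) × Finset (Fin n)) :=
  Finset.univ.filter (fun q => good q ∧ q.1.card + q.2.card = i)

lemma heisDeg_false (I J : Finset (Fin n)) :
    heisDeg ((false, I, J) : HeisIdx n) = I.card + J.card := by
  simp [heisDeg]

lemma heisDAux_empty_inter [CharP k 2] {I J : Finset (Fin n)} (h : I ∩ J = ∅) :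
    heisDAux k n (false, I, J) = 0 := by
  rw [heisDAux_char2, h, Finset.sum_empty]

lemma good_insert {I J : Finset (Fin n)} {t₀ : Fin n} (ht₀ : t₀ ∉ I ∪ J)
    (hmin : (Mset I J).min = (t₀ : WithTop (Fin n))) {t : Fin n} (ht : t ∈ I ∩ J) :
    good (insert t₀ (I.erase t), insert t₀ (J.erase t)) := by
  refine ⟨t₀, by simp, ?_⟩
  have h1 : Mset (I.erase t) (J.erase t) = Mset I J := Mset_erase ht
  have h2 : t₀ ∉ (I.erase t) ∪ (J.erase t) := by
    rw [Finset.mem_union] at ht₀ ⊢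
    push_neg at ht₀ ⊢
    exact ⟨fun h => ht₀.1 (Finset.mem_of_mem_erase h), fun h => ht₀.2 (Finset.mem_of_mem_erase h)⟩
  rw [Mset_insert h2, h1, hmin]

lemma card_insert_erase {I : Finset (Fin n)} {t₀ t : Fin n} (ht₀ : t₀ ∉ I) (ht : t ∈ I) :
    (insert t₀ (I.erase t)).card = I.card := by
  rw [Finset.card_insert_of_notMem (fun h => ht₀ (Finset.mem_of_mem_erase h)),
    Finset.card_erase_of_mem ht]
  have : 1 ≤ I.card := Finset.card_pos.2 ⟨t, ht⟩
  omega

lemma map_chains_eq_span [CharP k 2] (i : ℕ) :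
    Submodule.map (heisD k n) (heisChains k n i) =
      Submodule.span k
        ((fun q : Finset (Fin n) × Finset (Fin n) => heisDAux k n (false, q.1, q.2)) ''
          ↑(QSet n i)) := by
  rw [heisChains_eq_span, Submodule.map_span]
  apply le_antisymm
  · rw [Submodule.span_le]
    rintro g ⟨g', ⟨p, hp, rfl⟩, rfl⟩
    rw [heisD_eb]
    rcases p with ⟨ε, I, J⟩
    cases ε
    · simp only [Set.mem_setOf_eq] at hp
      rw [heisDeg_false] at hp
      by_cases hgood : good (I, J)
      · exact Submodule.subset_span ⟨(I, J), by simp [QSet, hgood, hp], rfl⟩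
      · rcases Finset.eq_empty_or_nonempty (I ∩ J) with hKe | hKne
        · rw [heisDAux_empty_inter hKe]
          exact Submodule.zero_mem _
        · have hMne : (Mset I J).Nonempty := by
            obtain ⟨t, ht⟩ := hKne
            exact ⟨t, Finset.mem_union_left _ ht⟩
          obtain ⟨t₀, hmin⟩ := Finset.min_of_nonempty hMne
          have ht₀M : t₀ ∈ Mset I J := Finset.mem_of_min hmin
          have ht₀K : t₀ ∉ I ∩ J := fun h => hgood ⟨t₀, h, hmin⟩
          have ht₀IJ : t₀ ∉ I ∪ J := by
            rw [Mset, Finset.mem_union] at ht₀M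
            rcases ht₀M with h | h
            · exact absurd h ht₀K
            · exact Finset.mem_compl.1 h
          rw [heisDAux_eq_sum ht₀IJ]
          refine Submodule.sum_mem _ fun t ht => Submodule.subset_span ?_
          refine ⟨(insert t₀ (I.erase t), insert t₀ (J.erase t)), ?_, rfl⟩
          have htI : t ∈ I := (Finset.mem_inter.1 ht).1
          have htJ : t ∈ J := (Finset.mem_inter.1 ht).2
          have ht₀I : t₀ ∉ I := fun h => ht₀IJ (Finset.mem_union_left _ h)
          have ht₀J : t₀ ∉ J := fun h => ht₀IJ (Finset.mem_union_right _ h)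
          simp only [QSet, Finset.coe_filter, Finset.mem_univ, true_and, Set.mem_setOf_eq]
          exact ⟨good_insert ht₀IJ hmin ht,
            by rw [card_insert_erase ht₀I htI, card_insert_erase ht₀J htJ]; exact hp⟩
    · rw [heisDAux_true _ rfl]
      exact Submodule.zero_mem _
  · rw [Submodule.span_le]
    rintro g ⟨q, hq, rfl⟩
    simp only [QSet, Finset.coe_filter, Finset.mem_univ, true_and, Set.mem_setOf_eq] at hq
    refine Submodule.subset_span ⟨eb (false, q.1, q.2), ⟨(false, q.1, q.2), ?_, rfl⟩,
      by rw [heisD_eb]⟩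
    simp only [Set.mem_setOf_eq, heisDeg_false]
    exact hq.2

lemma finrank_map_chains [CharP k 2] (i : ℕ) :
    Module.finrank k (Submodule.map (heisD k n) (heisChains k n i)) = (QSet n i).card := by
  rw [map_chains_eq_span]
  have hrange : ((fun q : Finset (Fin n) × Finset (Fin n) => heisDAux k n (false, q.1, q.2)) ''
      ↑(QSet n i)) = Set.range (fun s : {q // q ∈ QSet n i} =>
        heisDAux k n (false, s.1.1, s.1.2)) := by
    ext g
    constructor
    · rintro ⟨q, hq, rfl⟩
      exact ⟨⟨q, hq⟩, rfl⟩
    · rintro ⟨⟨q, hq⟩, rfl⟩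
      exact ⟨q, hq, rfl⟩
  rw [hrange, finrank_span_eq_card, Fintype.card_coe]
  -- linear independence
  apply LinearIndependent.of_comp (sigMap k n)
  have hcomp : (⇑(sigMap k n) ∘ fun s : {q // q ∈ QSet n i} =>
      heisDAux k n (false, s.1.1, s.1.2)) = fun s => eb (false, s.1.1, s.1.2) := by
    funext s
    have hgood : good (s.1.1, s.1.2) := by
      have := (Finset.mem_filter.1 s.2).2.1
      exact this
    exact sigMap_heisDAux_of_good hgood
  rw [hcomp]
  have hpi : (fun s : {q // q ∈ QSet n i} => eb (k := k) (false, s.1.1, s.1.2)) =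
      (⇑(Pi.basisFun k (HeisIdx n)) ∘ fun s : {q // q ∈ QSet n i} =>
        ((false, s.1.1, s.1.2) : HeisIdx n)) := by
    funext s
    rw [Function.comp_apply, Pi.basisFun_apply]
    rfl
  rw [hpi]
  refine (Pi.basisFun k (HeisIdx n)).linearIndependent.comp _ ?_
  intro s s' h
  simp only [Prod.mk.injEq] at h
  exact Subtype.ext (Prod.ext h.2.1 h.2.2)

end HeisAux
namespace HeisAux

variable {k : Type*} [Field k] {n : ℕ}

/-- degree-count -/
def cnt (n i : ℕ) : ℕ := (Finset.univ.filter (fun p : HeisIdx n => heisDeg p = i)).card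

lemma rank_nullity_chains (i : ℕ) :
    Module.finrank k (heisCycles k n i) +
      Module.finrank k (Submodule.map (heisD k n) (heisChains k n i)) =
        Module.finrank k (heisChains k n i) := by
  have h := LinearMap.finrank_range_add_finrank_ker
    ((heisD k n).domRestrict (heisChains k n i))
  rw [LinearMap.range_domRestrict, LinearMap.ker_domRestrict] at h
  have hker : Module.finrank k
      (Submodule.comap (heisChains k n i).subtype (LinearMap.ker (heisD k n))) =
        Module.finrank k (heisCycles k n i) := by
    have heq : Submodule.comap (heisChains k n i).subtype (LinearMap.ker (heisD k n)) =
        Submodule.comap (heisChains k n i).subtype (heisCycles k n i) := by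
      rw [heisCycles, Submodule.comap_inf, Submodule.comap_subtype_self, inf_top_eq]
    rw [heq]
    exact (Submodule.comapSubtypeEquivOfLe inf_le_right).finrank_eq
  omega

lemma boundaries_le_cycles (i : ℕ) : heisBoundaries k n i ≤ heisCycles k n i := by
  rintro g ⟨f, hf, rfl⟩
  exact ⟨LinearMap.mem_ker.2 (heisD_heisD f), heisD_mem_chains hf⟩

lemma finrank_homology_add (i : ℕ) :
    Module.finrank k (HeisHomology k n i) +
      Module.finrank k (heisBoundaries k n i) = Module.finrank k (heisCycles k n i) := by
  have h : Module.finrank k (HeisHomology k n i) +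
      Module.finrank k
        (Submodule.comap (heisCycles k n i).subtype (heisBoundaries k n i)) =
      Module.finrank k (heisCycles k n i) :=
    Submodule.finrank_quotient_add_finrank _
  have e : Module.finrank k
      (Submodule.comap (heisCycles k n i).subtype (heisBoundaries k n i)) =
      Module.finrank k (heisBoundaries k n i) :=
    (Submodule.comapSubtypeEquivOfLe (boundaries_le_cycles i)).finrank_eq
  omega

lemma betti_formula [CharP k 2] (i : ℕ) :
    Module.finrank k (HeisHomology k n i) + (QSet n i).card + (QSet n (i + 1)).card =
      cnt n i := by
  have h1 := finrank_homology_add (k := k) (n := n) i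
  have h2 := rank_nullity_chains (k := k) (n := n) i
  rw [finrank_map_chains] at h2
  have h3 : Module.finrank k (heisBoundaries k n i) = (QSet n (i + 1)).card := by
    rw [heisBoundaries, finrank_map_chains]
  rw [finrank_chains] at h2
  rw [h3] at h1
  rw [show cnt n i = (Finset.univ.filter (fun p : HeisIdx n => heisDeg p = i)).card from rfl]
  omega

lemma heisDeg_le (p : HeisIdx n) : heisDeg p ≤ 2 * n + 1 := by
  have h1 : p.2.1.card ≤ n := by
    simpa using Finset.card_le_univ p.2.1
  have h2 : p.2.2.card ≤ n := by
    simpa using Finset.card_le_univ p.2.2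
  rcases p with ⟨ε, I, J⟩
  cases ε <;> simp [heisDeg] at h1 h2 ⊢ <;> omega

lemma betti_vanish (i : ℕ) (hi : 2 * n + 2 ≤ i) :
    Module.finrank k (HeisHomology k n i) = 0 := by
  have hZ : heisCycles k n i = ⊥ := by
    rw [eq_bot_iff]
    rintro f ⟨_, hf2⟩
    have : f = 0 := by
      funext p
      exact hf2 p (by have := heisDeg_le p; omega)
    simp [this]
  have h1 := finrank_homology_add (k := k) (n := n) i
  have h2 : Module.finrank k (heisCycles k n i) = 0 := by
    rw [hZ]
    exact finrank_bot k _
  omega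

end HeisAux
namespace HeisAux

open Polynomial

variable {n : ℕ}

abbrev PairIdx (n : ℕ) := Finset (Fin n) × Finset (Fin n)

/-- degree of a pair -/
def dd (q : PairIdx n) : ℕ := q.1.card + q.2.card

lemma sum_subsets_pow (n : ℕ) :
    ∑ I : Finset (Fin n), (X : ℤ[X]) ^ I.card = (1 + X) ^ n := by
  have h := Finset.prod_add (fun _ : Fin n => (X : ℤ[X])) (fun _ => 1) Finset.univ
  simp only [Finset.prod_const, Finset.prod_const_one, mul_one, one_pow] at h
  rw [Finset.powerset_univ] at h
  rw [show (Finset.univ : Finset (Fin n)).card = n by simp] at h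
  rw [← h]
  ring

lemma sum_all_pairs (n : ℕ) :
    ∑ q : PairIdx n, (X : ℤ[X]) ^ dd q = (1 + X) ^ (2 * n) := by
  rw [Fintype.sum_prod_type]
  have : ∀ I : Finset (Fin n), ∑ J : Finset (Fin n), (X : ℤ[X]) ^ dd (I, J) =
      X ^ I.card * (1 + X) ^ n := by
    intro I
    rw [← sum_subsets_pow, Finset.mul_sum]
    exact Finset.sum_congr rfl fun J _ => (pow_add _ _ _)
  rw [Finset.sum_congr rfl fun I _ => this I, ← Finset.sum_mul, sum_subsets_pow]
  ring

lemma sum_all_idx (n : ℕ) :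
    ∑ p : HeisIdx n, (X : ℤ[X]) ^ heisDeg p = (1 + X) ^ (2 * n + 1) := by
  rw [Fintype.sum_prod_type]
  have hb : ∀ ε : Bool, ∑ q : PairIdx n, (X : ℤ[X]) ^ heisDeg (ε, q) =
      X ^ (if ε then 1 else 0) * (1 + X) ^ (2 * n) := by
    intro ε
    rw [← sum_all_pairs, Finset.mul_sum]
    refine Finset.sum_congr rfl fun q _ => ?_
    rw [show heisDeg (ε, q) = (if ε then 1 else 0) + dd q by simp [heisDeg, dd, add_assoc], pow_add]
  rw [Fintype.sum_bool (fun ε => ∑ q : PairIdx n, (X : ℤ[X]) ^ heisDeg (ε, q))]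
  rw [hb true, hb false]
  norm_num
  ring

end HeisAux
namespace HeisAux

open Polynomial

variable {n : ℕ}

def QAll (n : ℕ) : Finset (PairIdx n) := Finset.univ.filter good

def S0 (n : ℕ) : Finset (PairIdx n) := Finset.univ.filter (fun q => Mset q.1 q.2 = ∅)

def S2 (n : ℕ) : Finset (PairIdx n) :=
  Finset.univ.filter (fun q => ¬ good q ∧ Mset q.1 q.2 ≠ ∅)

lemma not_good_of_Mset_empty {q : PairIdx n} (h : Mset q.1 q.2 = ∅) : ¬ good q := by
  rintro ⟨t, _, hmin⟩
  rw [h, Finset.min_empty] at hmin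
  exact (WithTop.coe_ne_top (a := t)) hmin.symm

lemma partition_sum (n : ℕ) :
    ∑ q ∈ QAll n, (X : ℤ[X]) ^ dd q + ∑ q ∈ S0 n, (X : ℤ[X]) ^ dd q +
      ∑ q ∈ S2 n, (X : ℤ[X]) ^ dd q = (1 + X) ^ (2 * n) := by
  rw [QAll, ← sum_all_pairs n]
  have h1 := Finset.sum_filter_add_sum_filter_not Finset.univ good
    (fun q : PairIdx n => (X : ℤ[X]) ^ dd q)
  have h2 := Finset.sum_filter_add_sum_filter_not
    (Finset.univ.filter (fun q : PairIdx n => ¬ good q))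
    (fun q => Mset q.1 q.2 = ∅) (fun q : PairIdx n => (X : ℤ[X]) ^ dd q)
  rw [Finset.filter_filter, Finset.filter_filter] at h2
  have e0 : Finset.filter (fun q : PairIdx n => ¬good q ∧ Mset q.1 q.2 = ∅) Finset.univ
      = S0 n := by
    apply Finset.filter_congr
    intro q _
    constructor
    · rintro ⟨_, h⟩; exact h
    · intro h; exact ⟨not_good_of_Mset_empty h, h⟩
  rw [e0] at h2
  have e2 : Finset.filter (fun q : PairIdx n => ¬good q ∧ ¬ Mset q.1 q.2 = ∅) Finset.univ
      = S2 n := rfl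
  rw [e2] at h2
  rw [← h1, ← h2]
  abel

/-- the degree-raising bijection -/
def phiMap (q : PairIdx n) : PairIdx n :=
  WithTop.recTopCoe q (fun t => (insert t q.1, insert t q.2)) (Mset q.1 q.2).min

def psiMap (q : PairIdx n) : PairIdx n :=
  WithTop.recTopCoe q (fun t => (q.1.erase t, q.2.erase t)) (Mset q.1 q.2).min

lemma phiMap_spec {q : PairIdx n} {t₀ : Fin n} (h : (Mset q.1 q.2).min = (t₀ : WithTop (Fin n))) :
    phiMap q = (insert t₀ q.1, insert t₀ q.2) := by
  rw [phiMap, h, WithTop.recTopCoe_coe]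

lemma psiMap_spec {q : PairIdx n} {t₀ : Fin n} (h : (Mset q.1 q.2).min = (t₀ : WithTop (Fin n))) :
    psiMap q = (q.1.erase t₀, q.2.erase t₀) := by
  rw [psiMap, h, WithTop.recTopCoe_coe]

lemma S2_min_spec {q : PairIdx n} (hq : q ∈ S2 n) :
    ∃ t₀ : Fin n, (Mset q.1 q.2).min = (t₀ : WithTop (Fin n)) ∧ t₀ ∉ q.1 ∪ q.2 := by
  rw [S2, Finset.mem_filter] at hq
  obtain ⟨_, hng, hne⟩ := hq
  obtain ⟨t₀, hmin⟩ := Finset.min_of_nonempty (Finset.nonempty_iff_ne_empty.2 hne)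
  refine ⟨t₀, hmin, ?_⟩
  have htM : t₀ ∈ Mset q.1 q.2 := Finset.mem_of_min hmin
  have htK : t₀ ∉ q.1 ∩ q.2 := fun h => hng ⟨t₀, h, hmin⟩
  rw [Mset, Finset.mem_union] at htM
  rcases htM with h | h
  · exact absurd h htK
  · exact Finset.mem_compl.1 h

lemma QAll_min_spec {q : PairIdx n} (hq : q ∈ QAll n) :
    ∃ t₀ : Fin n, (Mset q.1 q.2).min = (t₀ : WithTop (Fin n)) ∧ t₀ ∈ q.1 ∩ q.2 := by
  rw [QAll, Finset.mem_filter] at hq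
  obtain ⟨t₀, ht, hmin⟩ := hq.2
  exact ⟨t₀, hmin, ht⟩

lemma shift_sum (n : ℕ) :
    ∑ q ∈ S2 n, (X : ℤ[X]) ^ (dd q + 2) = ∑ q ∈ QAll n, (X : ℤ[X]) ^ dd q := by
  refine Finset.sum_nbij' phiMap psiMap ?_ ?_ ?_ ?_ ?_
  · -- maps S2 into QAll
    intro a ha
    obtain ⟨t₀, hmin, hnm⟩ := S2_min_spec ha
    rw [phiMap_spec hmin]
    rw [QAll, Finset.mem_filter]
    refine ⟨Finset.mem_univ _, t₀, by simp, ?_⟩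
    show (Mset (insert t₀ a.1) (insert t₀ a.2)).min = _
    rw [Mset_insert hnm, hmin]
  · -- maps QAll into S2
    intro a ha
    obtain ⟨t₀, hmin, hK⟩ := QAll_min_spec ha
    rw [psiMap_spec hmin]
    have hMe : Mset (a.1.erase t₀) (a.2.erase t₀) = Mset a.1 a.2 := Mset_erase hK
    rw [S2, Finset.mem_filter]
    refine ⟨Finset.mem_univ _, ?_, ?_⟩
    · rintro ⟨t, htm, hmin'⟩
      show False
      have : (Mset (a.1.erase t₀) (a.2.erase t₀)).min = (t : WithTop (Fin n)) := hmin'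
      rw [hMe, hmin] at this
      have ht0 : t = t₀ := by exact_mod_cast this.symm
      subst ht0
      simp only [Finset.mem_inter, Finset.mem_erase] at htm
      exact htm.1.1 rfl
    · show Mset (a.1.erase t₀) (a.2.erase t₀) ≠ ∅
      rw [hMe]
      intro h
      rw [h, Finset.min_empty] at hmin
      exact (WithTop.coe_ne_top (a := t₀)) hmin.symm
  · -- psi ∘ phi = id on S2
    intro a ha
    obtain ⟨t₀, hmin, hnm⟩ := S2_min_spec ha
    rw [phiMap_spec hmin]
    have hM : Mset (insert t₀ a.1) (insert t₀ a.2) = Mset a.1 a.2 := Mset_insert hnm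
    have hmin' : (Mset (insert t₀ a.1) (insert t₀ a.2)).min = (t₀ : WithTop (Fin n)) := by
      rw [hM, hmin]
    rw [psiMap_spec (q := (insert t₀ a.1, insert t₀ a.2)) hmin']
    rw [Finset.mem_union] at hnm
    push_neg at hnm
    show ((insert t₀ a.1).erase t₀, (insert t₀ a.2).erase t₀) = a
    rw [Finset.erase_insert hnm.1, Finset.erase_insert hnm.2]
  · -- phi ∘ psi = id on QAll
    intro a ha
    obtain ⟨t₀, hmin, hK⟩ := QAll_min_spec ha
    rw [Finset.mem_inter] at hK
    rw [psiMap_spec hmin]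
    have hM : Mset (a.1.erase t₀) (a.2.erase t₀) = Mset a.1 a.2 :=
      Mset_erase (Finset.mem_inter.2 hK)
    have hmin' : (Mset (a.1.erase t₀) (a.2.erase t₀)).min = (t₀ : WithTop (Fin n)) := by
      rw [hM, hmin]
    rw [phiMap_spec (q := (a.1.erase t₀, a.2.erase t₀)) hmin']
    show (insert t₀ (a.1.erase t₀), insert t₀ (a.2.erase t₀)) = a
    rw [Finset.insert_erase hK.1, Finset.insert_erase hK.2]
  · -- values
    intro a ha
    obtain ⟨t₀, hmin, hnm⟩ := S2_min_spec ha
    rw [phiMap_spec hmin]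
    rw [Finset.mem_union] at hnm
    push_neg at hnm
    have : dd ((insert t₀ a.1, insert t₀ a.2) : PairIdx n) = dd a + 2 := by
      show (insert t₀ a.1).card + (insert t₀ a.2).card = _
      rw [Finset.card_insert_of_notMem hnm.1, Finset.card_insert_of_notMem hnm.2]
      show _ = a.1.card + a.2.card + 2
      omega
    rw [this]

end HeisAux
namespace HeisAux

open Polynomial

variable {n : ℕ}

lemma S0_char {q : PairIdx n} (h : q ∈ S0 n) : q.2 = q.1ᶜ ∧ dd q = n := by
  rw [S0, Finset.mem_filter] at h
  have h2 := h.2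
  have hint : q.1 ∩ q.2 = ∅ := by
    ext a
    simp only [Finset.notMem_empty, iff_false]
    intro ha
    have : a ∈ Mset q.1 q.2 := Finset.mem_union_left _ ha
    rw [h2] at this
    exact absurd this (Finset.notMem_empty a)
  have huni : q.1 ∪ q.2 = Finset.univ := by
    rw [← Finset.compl_empty]
    rw [← compl_compl (q.1 ∪ q.2)]
    congr 1
    ext a
    simp only [Finset.notMem_empty, iff_false, Finset.mem_compl]
    intro ha
    have : a ∈ Mset q.1 q.2 := Finset.mem_union_right _ (Finset.mem_compl.2 ha)
    rw [h2] at this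
    exact absurd this (Finset.notMem_empty a)
  constructor
  · ext a
    rw [Finset.mem_compl]
    constructor
    · intro ha hb
      have : a ∈ q.1 ∩ q.2 := Finset.mem_inter.2 ⟨hb, ha⟩
      rw [hint] at this
      exact absurd this (Finset.notMem_empty a)
    · intro ha
      have : a ∈ q.1 ∪ q.2 := huni ▸ Finset.mem_univ a
      rw [Finset.mem_union] at this
      tauto
  · have := Finset.card_union_add_card_inter q.1 q.2
    rw [hint, huni, Finset.card_empty, Finset.card_univ, Fintype.card_fin] at this
    show q.1.card + q.2.card = n
    omega

lemma S0_sum (n : ℕ) : ∑ q ∈ S0 n, (X : ℤ[X]) ^ dd q = (2 * X) ^ n := by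
  have key : ∑ q ∈ S0 n, (X : ℤ[X]) ^ dd q = ∑ _I : Finset (Fin n), (X : ℤ[X]) ^ n := by
    refine Finset.sum_nbij' (fun q => q.1) (fun I => (I, Iᶜ)) ?_ ?_ ?_ ?_ ?_
    · intro a _; exact Finset.mem_univ _
    · intro I _
      rw [S0, Finset.mem_filter]
      refine ⟨Finset.mem_univ _, ?_⟩
      show (I ∩ Iᶜ) ∪ (I ∪ Iᶜ)ᶜ = ∅
      simp
    · intro a ha
      have := (S0_char ha).1
      exact Prod.ext rfl this.symm
    · intro I _; rfl
    · intro a ha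
      rw [(S0_char ha).2]
  rw [key, Finset.sum_const, Finset.card_univ, Fintype.card_finset, Fintype.card_fin,
    nsmul_eq_mul, mul_pow]
  push_cast
  ring

/-- The key rank identity. -/
lemma key_identity (n : ℕ) :
    (1 + X ^ 2) * ∑ q ∈ QAll n, (X : ℤ[X]) ^ dd q =
      X ^ 2 * ((1 + X) ^ (2 * n) - (2 * X) ^ n) := by
  have h1 := partition_sum n
  have h2 := shift_sum n
  have h3 := S0_sum n
  have h4 : ∑ q ∈ S2 n, (X : ℤ[X]) ^ (dd q + 2) =
      X ^ 2 * ∑ q ∈ S2 n, (X : ℤ[X]) ^ dd q := by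
    rw [Finset.mul_sum]
    exact Finset.sum_congr rfl fun q _ => by rw [pow_add]; ring
  rw [h4] at h2
  linear_combination X^2 * h1 - h2 - X^2 * h3
end HeisAux
namespace HeisAux

open Polynomial

variable {n : ℕ}

lemma dd_le (q : PairIdx n) : dd q ≤ 2 * n := by
  have h1 : q.1.card ≤ n := by simpa using Finset.card_le_univ q.1
  have h2 : q.2.card ≤ n := by simpa using Finset.card_le_univ q.2
  show q.1.card + q.2.card ≤ 2 * n
  omega

lemma cnt_poly (n : ℕ) :
    ∑ i ∈ Finset.range (2 * n + 2), Polynomial.C ((cnt n i : ℤ)) * X ^ i =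
      (1 + X) ^ (2 * n + 1) := by
  rw [← sum_all_idx n,
    ← Finset.sum_fiberwise_of_maps_to (g := heisDeg) (t := Finset.range (2 * n + 2))
      (fun p _ => Finset.mem_range.2 (by have := heisDeg_le (n := n) p; omega))
      (fun p => (X : ℤ[X]) ^ heisDeg p)]
  refine Finset.sum_congr rfl fun i _ => ?_
  have : ∀ p ∈ Finset.univ.filter (fun p : HeisIdx n => heisDeg p = i),
      (X : ℤ[X]) ^ heisDeg p = X ^ i := by
    intro p hp
    rw [(Finset.mem_filter.1 hp).2]
  rw [Finset.sum_congr rfl this, Finset.sum_const]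
  rw [show (Finset.univ.filter (fun p : HeisIdx n => heisDeg p = i)).card = cnt n i from rfl,
    nsmul_eq_mul]
  simp [Polynomial.C_eq_intCast]

lemma qall_poly (n m : ℕ) (hm : 2 * n < m) :
    ∑ i ∈ Finset.range m, Polynomial.C (((QSet n i).card : ℤ)) * X ^ i =
      ∑ q ∈ QAll n, (X : ℤ[X]) ^ dd q := by
  rw [← Finset.sum_fiberwise_of_maps_to (g := dd) (t := Finset.range m)
      (fun q _ => Finset.mem_range.2 (by have := dd_le q; omega))
      (fun q => (X : ℤ[X]) ^ dd q)]
  refine Finset.sum_congr rfl fun i _ => ?_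
  have hfib : (QAll n).filter (fun q => dd q = i) = QSet n i := by
    rw [QAll, Finset.filter_filter]
    rfl
  rw [hfib]
  have : ∀ q ∈ QSet n i, (X : ℤ[X]) ^ dd q = X ^ i := by
    intro q hq
    rw [show dd q = i from (Finset.mem_filter.1 hq).2.2]
  rw [Finset.sum_congr rfl this, Finset.sum_const, nsmul_eq_mul]
  simp [Polynomial.C_eq_intCast]

lemma qset_zero_card (n : ℕ) : (QSet n 0).card = 0 := by
  rw [Finset.card_eq_zero]
  ext q
  simp only [QSet, Finset.mem_filter, Finset.mem_univ, true_and, Finset.notMem_empty,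
    iff_false, not_and]
  rintro ⟨t, ht, _⟩ hdd
  have : q.1.Nonempty := ⟨t, (Finset.mem_inter.1 ht).1⟩
  have := Finset.card_pos.2 this
  omega

lemma qshift_poly (n : ℕ) :
    X * ∑ i ∈ Finset.range (2 * n + 2), Polynomial.C (((QSet n (i + 1)).card : ℤ)) * X ^ i =
      ∑ q ∈ QAll n, (X : ℤ[X]) ^ dd q := by
  have h := Finset.sum_range_succ' (fun j => Polynomial.C (((QSet n j).card : ℤ)) * X ^ j)
    (2 * n + 2)
  rw [qall_poly n (2 * n + 3) (by omega)] at h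
  rw [Finset.mul_sum, h, qset_zero_card]
  simp only [Nat.cast_zero, map_zero, zero_mul, add_zero]
  refine Finset.sum_congr rfl fun i _ => ?_
  ring

end HeisAux


/-- **Main theorem.** For a field `k` of characteristic `2`, the generating function of
the Betti numbers of the Heisenberg Lie algebra `h_n` satisfies
`(1+t^2) * (Σ_{i ≥ 0} dim_k H_i(h_n; k) t^i) = (1+t^3)(1+t)^{2n} + (t+t^2)(2t)^n`
in `ℤ[t]`, equivalently the generating function is
`((1+t^3)(1+t)^{2n} + (t+t^2)(2t)^n) / (1+t^2)`.  (The homology vanishes in all degrees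
above `2n+1`, so the generating function is the stated finite sum.) -/
theorem heisenberg_betti_generating_function (k : Type*) [Field k] [CharP k 2] (n : ℕ) :
    (∀ i, 2 * n + 2 ≤ i → Module.finrank k (HeisHomology k n i) = 0) ∧
    (1 + X ^ 2 : ℤ[X]) *
        ∑ i ∈ Finset.range (2 * n + 2),
          Polynomial.C (Module.finrank k (HeisHomology k n i) : ℤ) * X ^ i =
      (1 + X ^ 3) * (1 + X) ^ (2 * n) + (X + X ^ 2) * (2 * X) ^ n := by
    classical
  refine ⟨fun i hi => HeisAux.betti_vanish i hi, ?_⟩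
  have hbs : ∑ i ∈ Finset.range (2 * n + 2),
        Polynomial.C (Module.finrank k (HeisHomology k n i) : ℤ) * X ^ i
      + ∑ i ∈ Finset.range (2 * n + 2),
          Polynomial.C (((HeisAux.QSet n i).card : ℤ)) * X ^ i
      + ∑ i ∈ Finset.range (2 * n + 2),
          Polynomial.C (((HeisAux.QSet n (i + 1)).card : ℤ)) * X ^ i
      = ∑ i ∈ Finset.range (2 * n + 2), Polynomial.C ((HeisAux.cnt n i : ℤ)) * X ^ i := by
    rw [← Finset.sum_add_distrib, ← Finset.sum_add_distrib]
    refine Finset.sum_congr rfl fun i _ => ?_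
    have hz : (Module.finrank k (HeisHomology k n i) : ℤ) + ((HeisAux.QSet n i).card : ℤ) +
        ((HeisAux.QSet n (i + 1)).card : ℤ) = (HeisAux.cnt n i : ℤ) := by
      exact_mod_cast HeisAux.betti_formula (k := k) (n := n) i
    rw [← add_mul, ← add_mul, ← map_add, ← map_add, hz]
  have hC2 : ∑ i ∈ Finset.range (2 * n + 2), Polynomial.C ((HeisAux.cnt n i : ℤ)) * X ^ i =
      (1 + X) ^ (2 * n) * (1 + X) := by
    rw [HeisAux.cnt_poly]
    ring
  have hP1 := HeisAux.qall_poly n (2 * n + 2) (by omega)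
  have hP2 := HeisAux.qshift_poly n
  have hR := HeisAux.key_identity n
  refine mul_left_cancel₀ (Polynomial.X_ne_zero : (X : ℤ[X]) ≠ 0) ?_
  linear_combination (X * (1 + X^2)) * hbs + (X * (1 + X^2)) * hC2 -
    (X * (1 + X^2)) * hP1 - (1 + X^2) * hP2 - (1 + X) * hR
end

section
/- Let k be a field of characteristic 2, let V be the vector space k^{2n+1} with basis z, x_1, ..., x_n, y_1, ..., y_n, and let d: Λ^• V → Λ^{•-1} V be the linear map determined on the standard exterior basis by d(w_1 ∧ ... ∧ w_p) = Σ_{i<j} [w_i, w_j] ∧ w_1 ∧ ... ∧ ŵ_i ∧ ... ∧ ŵ_j ∧ ... ∧ w_p, where [x_i, y_i] = [y_i, x_i] = z for 1 ≤ i ≤ n and all other brackets of basis elements are 0. Then d ∘ d = 0, and the dimensions b_i = dim_k ker(d: Λ^i V → Λ^{i-1} V) − dim_k im(d: Λ^{i+1} V → Λ^i V) satisfy the polynomial identity (1 + t^2) · Σ_{i ≥ 0} b_i t^i = (1 + t^3)(1 + t)^{2n} + (t + t^2)(2t)^n. -/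
open Polynomial

variable (k : Type*) [Field k]

/-- The `i`-th Betti number of the Chevalley–Eilenberg complex, as an integer:
`b_i = dim_k ker(d : Λ^i V → Λ^{i-1} V) − dim_k im(d : Λ^{i+1} V → Λ^i V)`. -/
noncomputable def heisBetti (k : Type*) [Field k] (n i : ℕ) : ℤ :=
  (Module.finrank k (heisCycles k n i) : ℤ) -
    (Module.finrank k (heisBoundaries k n i) : ℤ)

open Finset

namespace Heis
variable {n : ℕ}

/-- complement of the symmetric difference -/
def Mset (I J : Finset (Fin n)) : Finset (Fin n) := (symmDiff I J)ᶜ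

lemma mem_Mset {I J : Finset (Fin n)} {a : Fin n} : a ∈ Mset I J ↔ (a ∈ I ↔ a ∈ J) := by
  simp only [Mset, Finset.mem_compl, Finset.mem_symmDiff]
  tauto

lemma inter_subset_Mset {I J : Finset (Fin n)} : I ∩ J ⊆ Mset I J := by
  intro a ha
  simp only [Finset.mem_inter] at ha
  exact mem_Mset.2 (by tauto)

lemma Mset_erase {I J : Finset (Fin n)} {t : Fin n} (hI : t ∈ I) (hJ : t ∈ J) :
    Mset (I.erase t) (J.erase t) = Mset I J := by
  ext a
  simp only [mem_Mset, Finset.mem_erase]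
  by_cases h : a = t <;> simp [h, hI, hJ]

lemma Mset_insert {I J : Finset (Fin n)} {t : Fin n} (hI : t ∉ I) (hJ : t ∉ J) :
    Mset (insert t I) (insert t J) = Mset I J := by
  ext a
  simp only [mem_Mset, Finset.mem_insert]
  by_cases h : a = t <;> simp [h, hI, hJ]

lemma Mset_empty_iff {I J : Finset (Fin n)} : Mset I J = ∅ ↔ J = Iᶜ := by
  constructor
  · intro h
    ext a
    have := Finset.eq_empty_iff_forall_notMem.1 h a
    rw [mem_Mset] at this
    simp only [Finset.mem_compl]
    tauto
  · intro h
    subst h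
    ext a
    simp [mem_Mset]

noncomputable def t0 (I J : Finset (Fin n)) (h : (Mset I J).Nonempty) : Fin n :=
  (Mset I J).min' h

def Good (I J : Finset (Fin n)) : Prop :=
  ∃ h : (Mset I J).Nonempty, t0 I J h ∈ I ∩ J

noncomputable instance (I J : Finset (Fin n)) : Decidable (Good I J) := Classical.dec _

lemma t0_mem {I J : Finset (Fin n)} (h : (Mset I J).Nonempty) : t0 I J h ∈ Mset I J :=
  Finset.min'_mem _ _

lemma t0_congr {I J I' J' : Finset (Fin n)} (e : Mset I J = Mset I' J')
    (h : (Mset I J).Nonempty) :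
    t0 I J h = t0 I' J' (e ▸ h) := by
  unfold t0; congr 1

end Heis

namespace Heis
variable {n : ℕ}

lemma good_insert {I J : Finset (Fin n)} (h : (Mset I J).Nonempty)
    (hI : t0 I J h ∉ I) (hJ : t0 I J h ∉ J) :
    Good (insert (t0 I J h) I) (insert (t0 I J h) J) := by
  have e : Mset (insert (t0 I J h) I) (insert (t0 I J h) J) = Mset I J := Mset_insert hI hJ
  refine ⟨e.symm ▸ h, ?_⟩
  have : t0 (insert (t0 I J h) I) (insert (t0 I J h) J) (e.symm ▸ h) = t0 I J h :=
    (t0_congr e.symm h).symm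
  rw [this]
  simp

lemma good_erase_aux {I J : Finset (Fin n)} (hg : Good I J) :
    ∃ h : (Mset I J).Nonempty, t0 I J h ∈ I ∧ t0 I J h ∈ J ∧
      Mset (I.erase (t0 I J h)) (J.erase (t0 I J h)) = Mset I J ∧
      t0 I J h ∉ I.erase (t0 I J h) := by
  obtain ⟨h, ht⟩ := hg
  simp only [Finset.mem_inter] at ht
  exact ⟨h, ht.1, ht.2, Mset_erase ht.1 ht.2, Finset.notMem_erase _ _⟩

lemma t0_notmem_iff {I J : Finset (Fin n)} (h : (Mset I J).Nonempty) :
    t0 I J h ∈ I ↔ t0 I J h ∈ J := mem_Mset.1 (t0_mem h)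

end Heis

namespace Heis
variable {n : ℕ} (k : Type*) [Field k]

noncomputable def E (q : HeisIdx n) : HeisCE k n := Pi.single q (1 : k)

noncomputable def TAux (q : HeisIdx n) : HeisCE k n :=
  if q.1 then 0 else
    ∑ t ∈ q.2.1 ∩ q.2.2, E k (false, q.2.1.erase t, q.2.2.erase t)

noncomputable def Top : HeisCE k n →ₗ[k] HeisCE k n :=
  ∑ p : HeisIdx n, (LinearMap.proj p).smulRight (TAux k p)

noncomputable def muAux (q : HeisIdx n) : HeisCE k n :=
  if q.1 then 0 else
    if h : (Mset q.2.1 q.2.2).Nonempty then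
      if t0 q.2.1 q.2.2 h ∈ q.2.1 then 0
      else E k (false, insert (t0 q.2.1 q.2.2 h) q.2.1, insert (t0 q.2.1 q.2.2 h) q.2.2)
    else 0

noncomputable def muOp : HeisCE k n →ₗ[k] HeisCE k n :=
  ∑ p : HeisIdx n, (LinearMap.proj p).smulRight (muAux k p)

def zshift : HeisCE k n →ₗ[k] HeisCE k n where
  toFun f := fun p => if p.1 then f (false, p.2) else 0
  map_add' f g := by funext p; by_cases h : p.1 <;> simp [h]
  map_smul' c f := by funext p; by_cases h : p.1 <;> simp [h]

def Rproj : HeisCE k n →ₗ[k] HeisCE k n where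
  toFun f := fun p => if p.1 = true ∨ p.2.2 = p.2.1ᶜ then f p else 0
  map_add' f g := by funext p; by_cases h : p.1 = true ∨ p.2.2 = p.2.1ᶜ <;> simp [h]
  map_smul' c f := by funext p; by_cases h : p.1 = true ∨ p.2.2 = p.2.1ᶜ <;> simp [h]

lemma sum_smulRight_apply (aux : HeisIdx n → HeisCE k n) (f : HeisCE k n) :
    (∑ p : HeisIdx n, (LinearMap.proj p).smulRight (aux p) : HeisCE k n →ₗ[k] HeisCE k n) f
      = ∑ p : HeisIdx n, f p • aux p := by
  simp [LinearMap.sum_apply, LinearMap.smulRight_apply]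

lemma sum_smulRight_single (aux : HeisIdx n → HeisCE k n) (q : HeisIdx n) (x : k) :
    (∑ p : HeisIdx n, (LinearMap.proj p).smulRight (aux p) : HeisCE k n →ₗ[k] HeisCE k n)
      (Pi.single q x) = x • aux q := by
  rw [sum_smulRight_apply]
  rw [Finset.sum_eq_single q]
  · simp
  · intro p _ hp
    simp [Pi.single_apply, hp]
  · simp

lemma Top_single (q : HeisIdx n) (x : k) : Top k (Pi.single q x) = x • TAux k q :=
  sum_smulRight_single k _ q x

lemma muOp_single (q : HeisIdx n) (x : k) : muOp k (Pi.single q x) = x • muAux k q :=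
  sum_smulRight_single k _ q x

lemma Top_apply (f : HeisCE k n) : Top k f = ∑ p : HeisIdx n, f p • TAux k p :=
  sum_smulRight_apply k _ f

lemma muOp_apply (f : HeisCE k n) : muOp k f = ∑ p : HeisIdx n, f p • muAux k p :=
  sum_smulRight_apply k _ f

lemma heisD_apply (f : HeisCE k n) : heisD k n f = ∑ p : HeisIdx n, f p • heisDAux k n p :=
  sum_smulRight_apply k _ f

lemma zshift_single (a : Finset (Fin n) × Finset (Fin n)) (x : k) :
    zshift k (Pi.single ((false, a) : HeisIdx n) x) = Pi.single ((true, a) : HeisIdx n) x := by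
  funext p
  rcases p with ⟨b, c⟩
  cases b <;> simp [zshift, Pi.single_apply, Prod.ext_iff]

lemma zshift_single_z (a : Finset (Fin n) × Finset (Fin n)) (x : k) :
    zshift k (Pi.single ((true, a) : HeisIdx n) x) = 0 := by
  funext p
  rcases p with ⟨b, c⟩
  cases b <;> simp [zshift, Pi.single_apply, Prod.ext_iff]

end Heis

namespace Heis
variable {n : ℕ} (k : Type*) [Field k]

lemma TAux_z (a : Finset (Fin n) × Finset (Fin n)) : TAux k ((true, a) : HeisIdx n) = 0 := by
  simp [TAux]

lemma muAux_z (a : Finset (Fin n) × Finset (Fin n)) : muAux k ((true, a) : HeisIdx n) = 0 := by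
  simp [muAux]

lemma DAux_eq [CharP k 2] (q : HeisIdx n) :
    heisDAux k n q = zshift k (TAux k q) := by
  rcases q with ⟨b, a⟩
  cases b
  · have hneg : (-1 : k) = 1 := CharTwo.neg_eq 1
    simp only [heisDAux, TAux, if_neg (Bool.false_ne_true), map_sum]
    rw [Finset.sum_congr rfl]
    intro t _
    rw [hneg, one_pow, one_smul, E, zshift_single]
  · simp [heisDAux, TAux_z]

lemma heisD_eq_comp [CharP k 2] : heisD k n = (zshift k) ∘ₗ (Top k) := by
  apply LinearMap.pi_ext
  intro q x
  rw [LinearMap.comp_apply]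
  rw [show heisD k n (Pi.single q x) = x • heisDAux k n q from sum_smulRight_single k _ q x]
  rw [Top_single, map_smul, DAux_eq]

lemma Top_comp_zshift : ((Top k) ∘ₗ (zshift k) : HeisCE k n →ₗ[k] HeisCE k n) = 0 := by
  apply LinearMap.pi_ext
  intro q x
  rcases q with ⟨b, a⟩
  cases b
  · rw [LinearMap.comp_apply, zshift_single, Top_single, TAux_z, smul_zero]; rfl
  · rw [LinearMap.comp_apply, zshift_single_z, map_zero]; rfl

lemma heisD_comp_heisD [CharP k 2] : heisD k n ∘ₗ heisD k n = 0 := by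
  rw [heisD_eq_comp]
  calc (zshift k ∘ₗ Top k) ∘ₗ (zshift k ∘ₗ Top k)
      = zshift k ∘ₗ ((Top k ∘ₗ zshift k) ∘ₗ Top k) := by
        rw [LinearMap.comp_assoc, LinearMap.comp_assoc]
    _ = 0 := by rw [Top_comp_zshift k, LinearMap.zero_comp, LinearMap.comp_zero]

end Heis

namespace Heis
variable {n : ℕ} (k : Type*) [Field k]

lemma vec_add_self [CharP k 2] (v : HeisCE k n) : v + v = 0 := by
  rw [← two_smul k v, CharTwo.two_eq_zero, zero_smul]

lemma insert_inter_insert {I J : Finset (Fin n)} {t : Fin n} :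
    (insert t I) ∩ (insert t J) = insert t (I ∩ J) := by
  ext a
  simp only [Finset.mem_inter, Finset.mem_insert]
  tauto

lemma insert_erase_of_ne {I : Finset (Fin n)} {s t : Fin n} (h : s ≠ t) :
    insert s (I.erase t) = (insert s I).erase t := by
  ext a
  simp only [Finset.mem_insert, Finset.mem_erase]
  constructor
  · rintro (rfl | ⟨ha, hI⟩)
    · exact ⟨h, Or.inl rfl⟩
    · exact ⟨ha, Or.inr hI⟩
  · rintro ⟨ha, (rfl | hI)⟩
    · exact Or.inl rfl
    · exact Or.inr ⟨ha, hI⟩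

lemma muAux_false (I J : Finset (Fin n)) (h : (Mset I J).Nonempty) :
    muAux k ((false, I, J) : HeisIdx n) =
      if t0 I J h ∈ I then 0
      else E k (false, insert (t0 I J h) I, insert (t0 I J h) J) := by
  simp [muAux, dif_pos h]

lemma TAux_false (I J : Finset (Fin n)) :
    TAux k ((false, I, J) : HeisIdx n) =
      ∑ t ∈ I ∩ J, E k (false, I.erase t, J.erase t) := by
  simp [TAux]

lemma Rproj_single (q : HeisIdx n) (x : k) :
    Rproj k (Pi.single q x) =
      if q.1 = true ∨ q.2.2 = q.2.1ᶜ then Pi.single q x else 0 := by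
  funext p
  by_cases hpq : p = q
  · subst hpq
    by_cases h : p.1 = true ∨ p.2.2 = p.2.1ᶜ <;> simp [Rproj, h]
  · by_cases h : q.1 = true ∨ q.2.2 = q.2.1ᶜ <;>
      by_cases h' : p.1 = true ∨ p.2.2 = p.2.1ᶜ <;>
      simp [Rproj, h, h', Pi.single_apply, hpq]

/-- the inner erase term of `μ(T(E q))` -/
lemma muAux_erase (I J : Finset (Fin n)) (h : (Mset I J).Nonempty)
    {t : Fin n} (htI : t ∈ I) (htJ : t ∈ J) :
    muAux k ((false, I.erase t, J.erase t) : HeisIdx n) =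
      if t0 I J h ∈ I.erase t then 0
      else E k (false, insert (t0 I J h) (I.erase t), insert (t0 I J h) (J.erase t)) := by
  have e : Mset (I.erase t) (J.erase t) = Mset I J := Mset_erase htI htJ
  have h' : (Mset (I.erase t) (J.erase t)).Nonempty := by rw [e]; exact h
  have ht0 : t0 (I.erase t) (J.erase t) h' = t0 I J h := by
    unfold t0; congr 1
  rw [muAux_false k _ _ h', ht0]

/-- The key Koszul-homotopy identity in characteristic 2. -/
lemma koszul_single [CharP k 2] (q : HeisIdx n) :
    Top k (muAux k q) + muOp k (TAux k q) + Rproj k (E k q) = E k q := by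
  rcases q with ⟨b, I, J⟩
  cases b
  case true => simp [TAux_z, muAux_z, E, Rproj_single]
  case false =>
  by_cases h : (Mset I J).Nonempty
  case neg =>
    have hc : J = Iᶜ := Mset_empty_iff.1 (Finset.not_nonempty_iff_eq_empty.1 h)
    have hIJ : I ∩ J = ∅ := by rw [hc]; exact Finset.inter_compl I
    have hmu : muAux k ((false, I, J) : HeisIdx n) = 0 := by simp [muAux, dif_neg h]
    have hT : TAux k ((false, I, J) : HeisIdx n) = 0 := by rw [TAux_false, hIJ]; simp
    rw [hmu, hT, map_zero, map_zero, zero_add, zero_add, E, Rproj_single]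
    simp [hc]
  case pos =>
    have hcne : J ≠ Iᶜ := by
      intro hc
      rw [← Mset_empty_iff] at hc
      rw [hc] at h
      exact Finset.not_nonempty_empty h
    have hR : Rproj k (E k ((false, I, J) : HeisIdx n)) = 0 := by
      rw [E, Rproj_single]
      simp [hcne]
    set t₀ := t0 I J h with ht₀
    by_cases hm : t₀ ∈ I
    · -- t₀ ∈ I ∩ J : μ(E q) = 0, μ(T(E q)) = E q
      have hmJ : t₀ ∈ J := (t0_notmem_iff h).1 hm
      rw [muAux_false k I J h, if_pos hm, map_zero, hR, TAux_false, map_sum, add_zero, zero_add]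
      have : ∀ t ∈ I ∩ J,
          muOp k (E k ((false, I.erase t, J.erase t) : HeisIdx n)) =
            muAux k ((false, I.erase t, J.erase t) : HeisIdx n) := by
        intro t _
        rw [E, muOp_single, one_smul]
      rw [Finset.sum_congr rfl this]
      rw [Finset.sum_eq_single_of_mem t₀ (Finset.mem_inter.2 ⟨hm, hmJ⟩)]
      · rw [muAux_erase k I J h hm hmJ, if_neg (Finset.notMem_erase _ _),
          Finset.insert_erase hm, Finset.insert_erase hmJ]
      · intro t htIJ htne
        rw [Finset.mem_inter] at htIJ
        rw [muAux_erase k I J h htIJ.1 htIJ.2, if_pos]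
        exact Finset.mem_erase.2 ⟨htne.symm, hm⟩
    · -- t₀ ∉ I : T(μ(E q)) = E q + S, μ(T(E q)) = S
      have hmJ : t₀ ∉ J := fun hc => hm ((t0_notmem_iff h).2 hc)
      have ht0IJ : t₀ ∉ I ∩ J := fun hc => hm (Finset.mem_inter.1 hc).1
      rw [muAux_false k I J h, if_neg hm, hR, add_zero]
      rw [E, Top_single, one_smul, TAux_false]
      rw [insert_inter_insert, Finset.sum_insert ht0IJ,
        Finset.erase_insert hm, Finset.erase_insert hmJ]
      rw [TAux_false, map_sum]
      have : ∀ t ∈ I ∩ J,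
          muOp k (E k ((false, I.erase t, J.erase t) : HeisIdx n)) =
            E k (false, (insert t₀ I).erase t, (insert t₀ J).erase t) := by
        intro t htIJ
        rw [Finset.mem_inter] at htIJ
        have htne : t₀ ≠ t := fun hc => hm (hc ▸ htIJ.1)
        rw [E, muOp_single, one_smul, muAux_erase k I J h htIJ.1 htIJ.2, if_neg, ht₀,
          insert_erase_of_ne htne.symm.symm, insert_erase_of_ne htne.symm.symm]
        · intro hc
          exact hm (Finset.mem_of_mem_erase hc)
      rw [Finset.sum_congr rfl this]
      rw [add_assoc, vec_add_self k, add_zero]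

end Heis

namespace Heis
variable {n : ℕ} (k : Type*) [Field k]

lemma erase_inter_erase {I J : Finset (Fin n)} {t : Fin n} :
    (I.erase t) ∩ (J.erase t) = (I ∩ J).erase t := by
  ext a
  simp only [Finset.mem_inter, Finset.mem_erase]
  tauto

lemma Top_TAux [CharP k 2] (q : HeisIdx n) : Top k (TAux k q) = 0 := by
  rcases q with ⟨b, I, J⟩
  cases b
  case true => rw [TAux_z, map_zero]
  case false =>
  rw [TAux_false, map_sum]
  have step : ∀ t ∈ I ∩ J,
      Top k (E k ((false, I.erase t, J.erase t) : HeisIdx n)) =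
        ∑ u ∈ (I ∩ J).erase t, E k (false, (I.erase t).erase u, (J.erase t).erase u) := by
    intro t _
    rw [E, Top_single, one_smul, TAux_false, erase_inter_erase]
  rw [Finset.sum_congr rfl step, Finset.sum_sigma']
  refine Finset.sum_involution (fun p _ => ⟨p.2, p.1⟩) ?_ ?_ ?_ ?_
  · intro a ha
    rw [Finset.mem_sigma] at ha
    have h2 : a.2 ≠ a.1 := (Finset.mem_erase.1 ha.2).1
    have : ((I.erase a.1).erase a.2 = (I.erase a.2).erase a.1) ∧
        ((J.erase a.1).erase a.2 = (J.erase a.2).erase a.1) :=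
      ⟨Finset.erase_right_comm, Finset.erase_right_comm⟩
    rw [this.1, this.2]
    exact vec_add_self k _
  · intro a ha _
    rw [Finset.mem_sigma] at ha
    have h2 : a.2 ≠ a.1 := (Finset.mem_erase.1 ha.2).1
    intro hc
    exact h2 (congrArg Sigma.fst hc)
  · intro a ha
    rw [Finset.mem_sigma] at ha ⊢
    have h2 := Finset.mem_erase.1 ha.2
    exact ⟨h2.2, Finset.mem_erase.2 ⟨fun hc => h2.1 hc.symm, ha.1⟩⟩
  · intro a _
    rfl

lemma Top_comp_Top [CharP k 2] :
    ((Top k) ∘ₗ (Top k) : HeisCE k n →ₗ[k] HeisCE k n) = 0 := by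
  apply LinearMap.pi_ext
  intro q x
  rw [LinearMap.comp_apply, Top_single, map_smul, Top_TAux, smul_zero]
  rfl

lemma koszul_op [CharP k 2] :
    ((Top k) ∘ₗ (muOp k) + (muOp k) ∘ₗ (Top k) + Rproj k : HeisCE k n →ₗ[k] HeisCE k n)
      = LinearMap.id := by
  apply LinearMap.pi_ext
  intro q x
  have hx : (Pi.single q x : HeisCE k n) = x • E k q := by
    funext p
    by_cases h : p = q <;> simp [E, Pi.single_apply, h]
  simp only [LinearMap.add_apply, LinearMap.comp_apply, LinearMap.id_apply, hx, map_smul,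
    muOp_single, Top_single, one_smul]
  rw [show muOp k (E k q) = muAux k q by rw [E, muOp_single, one_smul],
    show Top k (E k q) = TAux k q by rw [E, Top_single, one_smul], koszul_single]

-- support lemmas
lemma TAux_support {q p : HeisIdx n} (hp : TAux k q p ≠ 0) :
    p.1 = false ∧ q.1 = false ∧ heisDeg p + 2 = heisDeg q ∧ p.2.2 ≠ p.2.1ᶜ := by
  rcases q with ⟨b, I, J⟩
  cases b
  case true => rw [TAux_z] at hp; simp at hp
  case false =>
  rw [TAux_false] at hp
  have := Finset.exists_ne_zero_of_sum_ne_zero (by simpa using hp)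
  obtain ⟨t, htIJ, hne⟩ := this
  rw [Finset.mem_inter] at htIJ
  have hpe : p = ((false, I.erase t, J.erase t) : HeisIdx n) := by
    by_contra hc
    rw [E, Pi.single_apply, if_neg hc] at hne
    exact hne rfl
  subst hpe
  refine ⟨rfl, rfl, ?_, ?_⟩
  · have h1 : (I.erase t).card = I.card - 1 := Finset.card_erase_of_mem htIJ.1
    have h2 : (J.erase t).card = J.card - 1 := Finset.card_erase_of_mem htIJ.2
    have h3 : 1 ≤ I.card := Finset.card_pos.2 ⟨t, htIJ.1⟩
    have h4 : 1 ≤ J.card := Finset.card_pos.2 ⟨t, htIJ.2⟩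
    simp only [heisDeg]
    simp only [if_neg (Bool.false_ne_true)]
    omega
  · intro hc
    change J.erase t = (I.erase t)ᶜ at hc
    have h1 : t ∉ J.erase t := Finset.notMem_erase _ _
    have h2 : t ∉ I.erase t := Finset.notMem_erase _ _
    rw [hc] at h1
    simp only [Finset.mem_compl] at h1
    exact h1 h2

lemma muAux_support {q p : HeisIdx n} (hp : muAux k q p ≠ 0) :
    p.1 = false ∧ q.1 = false ∧ heisDeg p = heisDeg q + 2 ∧ Good p.2.1 p.2.2 := by
  rcases q with ⟨b, I, J⟩
  cases b
  case true => rw [muAux_z] at hp; simp at hp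
  case false =>
  by_cases h : (Mset I J).Nonempty
  case neg =>
    have h0 : muAux k ((false, I, J) : HeisIdx n) = 0 := by simp [muAux, dif_neg h]
    rw [h0] at hp
    simp at hp
  case pos =>
  rw [muAux_false k I J h] at hp
  by_cases hm : t0 I J h ∈ I
  · rw [if_pos hm] at hp; simp at hp
  rw [if_neg hm] at hp
  have hmJ : t0 I J h ∉ J := fun hc => hm ((t0_notmem_iff h).2 hc)
  have hpe : p = ((false, insert (t0 I J h) I, insert (t0 I J h) J) : HeisIdx n) := by
    by_contra hc
    rw [E, Pi.single_apply, if_neg hc] at hp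
    exact hp rfl
  subst hpe
  refine ⟨rfl, rfl, ?_, good_insert h hm hmJ⟩
  have h1 := Finset.card_insert_of_notMem hm
  have h2 := Finset.card_insert_of_notMem hmJ
  simp only [heisDeg, if_neg (Bool.false_ne_true)]
  omega

end Heis

namespace Heis
variable {n : ℕ} (k : Type*) [Field k]

lemma TAux_zero_of {q p : HeisIdx n} (h : p.1 = true ∨ p.2.2 = p.2.1ᶜ) :
    TAux k q p = 0 := by
  by_contra hc
  obtain ⟨h1, _, _, h4⟩ := TAux_support k hc
  rcases h with h | h
  · rw [h1] at h; exact Bool.false_ne_true h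
  · exact h4 h

lemma Top_coord_zero {f : HeisCE k n} {p : HeisIdx n} (h : p.1 = true ∨ p.2.2 = p.2.1ᶜ) :
    Top k f p = 0 := by
  rw [Top_apply]
  rw [Finset.sum_apply]
  refine Finset.sum_eq_zero fun q _ => ?_
  rw [Pi.smul_apply, TAux_zero_of k h, smul_zero]

lemma Rproj_Top (f : HeisCE k n) : Rproj k (Top k f) = 0 := by
  funext p
  show (if p.1 = true ∨ p.2.2 = p.2.1ᶜ then Top k f p else 0) = 0
  split
  · exact Top_coord_zero k ‹_›
  · rfl

lemma zshift_inj {f : HeisCE k n} (hz : ∀ a, f (true, a) = 0) (h : zshift k f = 0) :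
    f = 0 := by
  funext p
  rcases p with ⟨b, a⟩
  cases b
  · have := congrFun h (true, a)
    simpa [zshift] using this
  · exact hz a

lemma Top_eq_zero_of_D {f : HeisCE k n} [CharP k 2] (h : heisD k n f = 0) :
    Top k f = 0 := by
  rw [heisD_eq_comp] at h
  exact zshift_inj k (fun a => Top_coord_zero k (Or.inl rfl)) h

lemma koszul_apply [CharP k 2] (f : HeisCE k n) :
    Top k (muOp k f) + muOp k (Top k f) + Rproj k f = f := by
  have := congrFun (congrArg DFunLike.coe (koszul_op k (n := n))) f
  simpa using this

/-- decompose a vector into the span of the basis vectors of its support -/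
lemma mem_span_E (f : HeisCE k n) (S : Finset (HeisIdx n)) (h : ∀ p, p ∉ S → f p = 0) :
    f ∈ Submodule.span k (Set.range fun q : {p // p ∈ S} => E k q.1) := by
  have : f = ∑ p : HeisIdx n, f p • E k p := by
    funext r
    rw [Finset.sum_apply]
    rw [Finset.sum_eq_single r]
    · simp [E]
    · intro p _ hp
      simp [E, Pi.single_apply, Ne.symm hp]
    · simp
  rw [this]
  refine Submodule.sum_mem _ fun p _ => ?_
  by_cases hp : p ∈ S
  · exact Submodule.smul_mem _ _ (Submodule.subset_span ⟨⟨p, hp⟩, rfl⟩)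
  · rw [h p hp, zero_smul]
    exact Submodule.zero_mem _

/-- The key coordinate computation for linear independence. -/
lemma TAux_coord {I J I' J' : Finset (Fin n)} (hg : Good I J) (hg' : Good I' J')
    (h : (Mset I J).Nonempty) :
    TAux k ((false, I', J') : HeisIdx n)
        ((false, I.erase (t0 I J h), J.erase (t0 I J h)) : HeisIdx n)
      = if I' = I ∧ J' = J then 1 else 0 := by
  obtain ⟨h1, ht1⟩ := hg
  obtain ⟨h1', ht1'⟩ := hg'
  rw [Finset.mem_inter] at ht1 ht1'
  have ht1I : t0 I J h ∈ I := ht1.1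
  have ht1J : t0 I J h ∈ J := ht1.2
  rw [TAux_false, Finset.sum_apply]
  have term : ∀ t, (E k ((false, I'.erase t, J'.erase t) : HeisIdx n))
      ((false, I.erase (t0 I J h), J.erase (t0 I J h)) : HeisIdx n)
      = if I'.erase t = I.erase (t0 I J h) ∧ J'.erase t = J.erase (t0 I J h) then (1:k)
        else 0 := by
    intro t
    rw [E, Pi.single_apply]
    congr 1
    simp only [Prod.ext_iff, eq_comm]
    simp
  split
  case isTrue heq =>
    rw [heq.1, heq.2] at term ⊢
    rw [Finset.sum_eq_single_of_mem (t0 I J h) (Finset.mem_inter.2 ht1)]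
    · rw [term]
      simp
    · intro t htIJ htne
      rw [term, if_neg]
      rintro ⟨hcI, -⟩
      exact htne ((Finset.erase_inj I (Finset.mem_inter.1 htIJ).1).1 hcI)
  case isFalse hne =>
    refine Finset.sum_eq_zero fun t htIJ => ?_
    rw [term, if_neg]
    rintro ⟨hcI, hcJ⟩
    rw [Finset.mem_inter] at htIJ
    have e1 : Mset I' J' = Mset I J := by
      rw [← Mset_erase htIJ.1 htIJ.2, hcI, hcJ, Mset_erase ht1I ht1J]
    have ht0' : t0 I' J' h1' = t0 I J h := by
      rw [t0_congr e1 h1']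
    have hteq : t = t0 I J h := by
      by_contra hc
      have : t0 I J h ∈ I'.erase t := by
        rw [Finset.mem_erase]
        exact ⟨fun hcc => hc hcc.symm, ht0' ▸ ht1'.1⟩
      rw [hcI] at this
      exact Finset.notMem_erase _ _ this
    subst hteq
    apply hne
    constructor
    · rw [← Finset.insert_erase htIJ.1, hcI, Finset.insert_erase ht1I]
    · rw [← Finset.insert_erase htIJ.2, hcJ, Finset.insert_erase ht1J]

end Heis

namespace Heis
open Finset
variable (n : ℕ) (k : Type*) [Field k]

noncomputable def ZF (j : ℕ) : Finset (HeisIdx n) :=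
  univ.filter fun p => p.1 = true ∧ heisDeg p = j

noncomputable def GF (d : ℕ) : Finset (HeisIdx n) :=
  univ.filter fun p => p.1 = false ∧ Good p.2.1 p.2.2 ∧ heisDeg p = d

noncomputable def MF (j : ℕ) : Finset (HeisIdx n) :=
  univ.filter fun p => p.1 = false ∧ p.2.2 = p.2.1ᶜ ∧ heisDeg p = j

lemma mem_ZF {j : ℕ} {p : HeisIdx n} : p ∈ ZF n j ↔ p.1 = true ∧ heisDeg p = j := by
  simp [ZF]

lemma mem_GF {d : ℕ} {p : HeisIdx n} :
    p ∈ GF n d ↔ p.1 = false ∧ Good p.2.1 p.2.2 ∧ heisDeg p = d := by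
  simp [GF]

lemma mem_MF {j : ℕ} {p : HeisIdx n} :
    p ∈ MF n j ↔ p.1 = false ∧ p.2.2 = p.2.1ᶜ ∧ heisDeg p = j := by
  simp [MF]

variable {n}

noncomputable def bndFam (j : ℕ) : {p // p ∈ GF n (j+1)} → HeisCE k n :=
  fun q => heisD k n (E k q.1)

noncomputable def cycFam (j : ℕ) :
    ({p // p ∈ ZF n j} ⊕ {p // p ∈ GF n (j+2)} ⊕ {p // p ∈ MF n j}) → HeisCE k n :=
  fun x => match x with
  | .inl p => E k p.1
  | .inr (.inl q) => Top k (E k q.1)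
  | .inr (.inr p) => E k p.1

lemma D_single [CharP k 2] (q : HeisIdx n) :
    heisD k n (E k q) = zshift k (TAux k q) := by
  rw [E]
  rw [show heisD k n (Pi.single q (1:k)) = (1:k) • heisDAux k n q from
    sum_smulRight_single k _ q 1]
  rw [one_smul, DAux_eq]

lemma zshift_coord (f : HeisCE k n) (a : Finset (Fin n) × Finset (Fin n)) :
    zshift k f (true, a) = f (false, a) := rfl

lemma Top_single_one (q : HeisIdx n) : Top k (E k q) = TAux k q := by
  rw [E, Top_single, one_smul]

lemma bnd_indep [CharP k 2] (j : ℕ) : LinearIndependent k (bndFam k (n := n) j) := by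
  rw [Fintype.linearIndependent_iff]
  intro g hg i
  obtain ⟨⟨b, I, J⟩, hq⟩ := i
  have hmem := (mem_GF n).1 hq
  obtain ⟨hb, hgood, hdeg⟩ := hmem
  have hb' : b = false := hb
  subst hb'
  obtain ⟨h, -⟩ := id hgood
  have heval := congrFun hg ((true, I.erase (t0 I J h), J.erase (t0 I J h)) : HeisIdx n)
  rw [Finset.sum_apply, Pi.zero_apply] at heval
  simp only [Pi.smul_apply] at heval
  have key : ∀ i' : {p // p ∈ GF n (j+1)},
      g i' • (bndFam k (n := n) j i')
          ((true, I.erase (t0 I J h), J.erase (t0 I J h)) : HeisIdx n)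
        = if i' = ⟨((false, I, J) : HeisIdx n), hq⟩ then g i' else 0 := by
    intro i'
    obtain ⟨⟨b', I', J'⟩, hq'⟩ := i'
    have hmem' := (mem_GF n).1 hq'
    obtain ⟨hb2, hgood', hdeg'⟩ := hmem'
    have hb2' : b' = false := hb2
    subst hb2'
    rw [show (bndFam k (n := n) j ⟨((false, I', J') : HeisIdx n), hq'⟩)
        = heisD k n (E k ((false, I', J') : HeisIdx n)) from rfl]
    rw [D_single, zshift_coord, TAux_coord k hgood hgood' h]
    by_cases heq : I' = I ∧ J' = J
    · rw [if_pos heq, if_pos, smul_eq_mul, mul_one]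
      apply Subtype.ext
      rw [Prod.ext_iff]
      exact ⟨rfl, Prod.ext_iff.2 ⟨heq.1, heq.2⟩⟩
    · rw [if_neg heq, if_neg, smul_zero]
      intro hc
      apply heq
      have := congrArg Subtype.val hc
      rw [Prod.ext_iff] at this
      exact ⟨congrArg Prod.fst this.2, congrArg Prod.snd this.2⟩
  rw [Finset.sum_congr rfl (fun i' _ => key i')] at heval
  rw [Finset.sum_ite_eq' Finset.univ _ g] at heval
  simpa using heval

end Heis

namespace Heis
open Finset
variable {n : ℕ} (k : Type*) [Field k]

lemma E_coord_ne {q r : HeisIdx n} (hne : r ≠ q) : E k q r = 0 := by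
  simp [E, Pi.single_apply, hne]

lemma E_coord_self (q : HeisIdx n) : E k q q = 1 := by simp [E]

lemma sum_E_coord (S : Finset (HeisIdx n)) (c : {p // p ∈ S} → k) (r : HeisIdx n) :
    (∑ p : {p // p ∈ S}, c p • E k p.1) r = if hr : r ∈ S then c ⟨r, hr⟩ else 0 := by
  rw [Finset.sum_apply]
  simp only [Pi.smul_apply]
  split
  case isTrue hr =>
    rw [Finset.sum_eq_single (⟨r, hr⟩ : {p // p ∈ S})]
    · rw [E_coord_self, smul_eq_mul, mul_one]
    · intro p _ hp
      rw [E_coord_ne k (fun hc => hp (Subtype.ext hc.symm)), smul_zero]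
    · simp
  case isFalse hr =>
    refine Finset.sum_eq_zero fun p _ => ?_
    rw [E_coord_ne k (fun hc => hr (by rw [hc]; exact p.2)), smul_zero]

lemma erase_ne_erase_compl {I J : Finset (Fin n)} (t : Fin n) :
    J.erase t ≠ (I.erase t)ᶜ := by
  intro hc
  have h1 : t ∉ J.erase t := Finset.notMem_erase _ _
  have h2 : t ∉ I.erase t := Finset.notMem_erase _ _
  rw [hc] at h1
  exact h1 (Finset.mem_compl.2 h2)

lemma cyc_indep [CharP k 2] (j : ℕ) : LinearIndependent k (cycFam k (n := n) j) := by
  rw [Fintype.linearIndependent_iff]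
  intro g hg i
  rw [Fintype.sum_sum_type, Fintype.sum_sum_type] at hg
  -- names for the three partial sums as functions
  rcases i with p | q | p
  · -- z-type index: evaluate at p.1
    obtain ⟨hb, hdeg⟩ := (mem_ZF n).1 p.2
    have heval := congrFun hg p.1
    rw [Pi.add_apply, Pi.add_apply, Pi.zero_apply] at heval
    simp only [show ∀ x : {p // p ∈ ZF n j}, cycFam k (n := n) j (Sum.inl x) = E k x.1
      from fun _ => rfl] at heval
    rw [sum_E_coord, dif_pos p.2] at heval
    have h2 : (∑ x : {p // p ∈ GF n (j+2)},
        g (Sum.inr (Sum.inl x)) • cycFam k (n := n) j (Sum.inr (Sum.inl x))) p.1 = 0 := by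
      rw [Finset.sum_apply]
      refine Finset.sum_eq_zero fun x _ => ?_
      rw [Pi.smul_apply]
      rw [show cycFam k (n := n) j (Sum.inr (Sum.inl x)) = Top k (E k x.1) from rfl]
      rw [Top_single_one, TAux_zero_of k (Or.inl hb), smul_zero]
    have h3 : (∑ x : {p // p ∈ MF n j},
        g (Sum.inr (Sum.inr x)) • cycFam k (n := n) j (Sum.inr (Sum.inr x))) p.1 = 0 := by
      rw [Finset.sum_apply]
      refine Finset.sum_eq_zero fun x _ => ?_
      obtain ⟨hb', -, -⟩ := (mem_MF n).1 x.2
      rw [Pi.smul_apply]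
      rw [show cycFam k (n := n) j (Sum.inr (Sum.inr x)) = E k x.1 from rfl]
      rw [E_coord_ne k, smul_zero]
      intro hc
      have hxf : (x.1).1 = true := by rw [← hc]; exact hb
      rw [hxf] at hb'
      exact (Bool.false_ne_true hb'.symm)
    rw [h2, h3, add_zero, add_zero] at heval
    have : (fun x : {p // p ∈ ZF n j} => g (Sum.inl x)) ⟨p.1, p.2⟩ = 0 := heval
    simpa using this
  · -- Good-type index
    obtain ⟨⟨b, I, J⟩, hq⟩ := q
    obtain ⟨hb, hgood, hdeg⟩ := (mem_GF n).1 hq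
    have hb' : b = false := hb
    subst hb'
    obtain ⟨h, -⟩ := id hgood
    set r : HeisIdx n := (false, I.erase (t0 I J h), J.erase (t0 I J h)) with hr
    have heval := congrFun hg r
    rw [Pi.add_apply, Pi.add_apply, Pi.zero_apply] at heval
    have h1 : (∑ x : {p // p ∈ ZF n j},
        g (Sum.inl x) • cycFam k (n := n) j (Sum.inl x)) r = 0 := by
      rw [Finset.sum_apply]
      refine Finset.sum_eq_zero fun x _ => ?_
      obtain ⟨hb', -⟩ := (mem_ZF n).1 x.2
      rw [Pi.smul_apply, show cycFam k (n := n) j (Sum.inl x) = E k x.1 from rfl,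
        E_coord_ne k, smul_zero]
      intro hc
      have hxf : (x.1).1 = false := by rw [← hc, hr]
      rw [hxf] at hb'
      exact Bool.false_ne_true hb'
    have h3 : (∑ x : {p // p ∈ MF n j},
        g (Sum.inr (Sum.inr x)) • cycFam k (n := n) j (Sum.inr (Sum.inr x))) r = 0 := by
      rw [Finset.sum_apply]
      refine Finset.sum_eq_zero fun x _ => ?_
      obtain ⟨-, hcomp, -⟩ := (mem_MF n).1 x.2
      rw [Pi.smul_apply, show cycFam k (n := n) j (Sum.inr (Sum.inr x)) = E k x.1 from rfl,
        E_coord_ne k, smul_zero]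
      intro hc
      apply erase_ne_erase_compl (I := I) (J := J) (t0 I J h)
      have : r.2.2 = x.1.2.2 := by rw [hc]
      have h22 : J.erase (t0 I J h) = x.1.2.2 := this
      have h21 : I.erase (t0 I J h) = x.1.2.1 := by
        have : r.2.1 = x.1.2.1 := by rw [hc]
        exact this
      rw [h22, h21, hcomp]
    rw [h1, h3, zero_add, add_zero] at heval
    -- middle sum evaluates like bnd_indep
    have key : ∀ x : {p // p ∈ GF n (j+2)},
        g (Sum.inr (Sum.inl x)) • (cycFam k (n := n) j (Sum.inr (Sum.inl x))) r
          = if x = ⟨((false, I, J) : HeisIdx n), hq⟩ then g (Sum.inr (Sum.inl x)) else 0 := by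
      intro x
      obtain ⟨⟨b', I', J'⟩, hq'⟩ := x
      obtain ⟨hb2, hgood', hdeg'⟩ := (mem_GF n).1 hq'
      have hb2' : b' = false := hb2
      subst hb2'
      rw [show cycFam k (n := n) j (Sum.inr (Sum.inl ⟨((false, I', J') : HeisIdx n), hq'⟩))
          = Top k (E k ((false, I', J') : HeisIdx n)) from rfl]
      rw [Top_single_one, hr, TAux_coord k hgood hgood' h]
      by_cases heq : I' = I ∧ J' = J
      · rw [if_pos heq, if_pos, smul_eq_mul, mul_one]
        apply Subtype.ext
        rw [Prod.ext_iff]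
        exact ⟨rfl, Prod.ext_iff.2 ⟨heq.1, heq.2⟩⟩
      · rw [if_neg heq, if_neg, smul_zero]
        intro hc
        apply heq
        have := congrArg Subtype.val hc
        rw [Prod.ext_iff] at this
        exact ⟨congrArg Prod.fst this.2, congrArg Prod.snd this.2⟩
    rw [Finset.sum_apply] at heval
    simp only [Pi.smul_apply] at heval
    rw [Finset.sum_congr rfl (fun x _ => key x)] at heval
    rw [Finset.sum_ite_eq' Finset.univ _ _] at heval
    simpa using heval
  · -- M-type index: evaluate at p.1
    obtain ⟨hb, hcomp, hdeg⟩ := (mem_MF n).1 p.2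
    have heval := congrFun hg p.1
    rw [Pi.add_apply, Pi.add_apply, Pi.zero_apply] at heval
    have h1 : (∑ x : {p // p ∈ ZF n j},
        g (Sum.inl x) • cycFam k (n := n) j (Sum.inl x)) p.1 = 0 := by
      rw [Finset.sum_apply]
      refine Finset.sum_eq_zero fun x _ => ?_
      obtain ⟨hb', -⟩ := (mem_ZF n).1 x.2
      rw [Pi.smul_apply, show cycFam k (n := n) j (Sum.inl x) = E k x.1 from rfl,
        E_coord_ne k, smul_zero]
      intro hc
      have hxf : (x.1).1 = false := by rw [← hc]; exact hb
      rw [hxf] at hb'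
      exact Bool.false_ne_true hb'
    have h2 : (∑ x : {p // p ∈ GF n (j+2)},
        g (Sum.inr (Sum.inl x)) • cycFam k (n := n) j (Sum.inr (Sum.inl x))) p.1 = 0 := by
      rw [Finset.sum_apply]
      refine Finset.sum_eq_zero fun x _ => ?_
      rw [Pi.smul_apply,
        show cycFam k (n := n) j (Sum.inr (Sum.inl x)) = Top k (E k x.1) from rfl,
        Top_single_one, TAux_zero_of k (Or.inr hcomp), smul_zero]
    rw [h1, h2, zero_add, zero_add] at heval
    simp only [show ∀ x : {p // p ∈ MF n j}, cycFam k (n := n) j (Sum.inr (Sum.inr x)) = E k x.1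
      from fun _ => rfl] at heval
    rw [sum_E_coord, dif_pos p.2] at heval
    have : (fun x : {p // p ∈ MF n j} => g (Sum.inr (Sum.inr x))) ⟨p.1, p.2⟩ = 0 := heval
    simpa using this

end Heis

namespace Heis
open Finset
variable {n : ℕ} (k : Type*) [Field k]

lemma eq_sum_single (f : HeisCE k n) : f = ∑ p : HeisIdx n, f p • E k p := by
  funext r
  rw [Finset.sum_apply, Finset.sum_eq_single r]
  · simp [E]
  · intro p _ hp
    simp [E, Pi.single_apply, Ne.symm hp]
  · simp

lemma Top_Top [CharP k 2] (f : HeisCE k n) : Top k (Top k f) = 0 := by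
  have := LinearMap.ext_iff.1 (Top_comp_Top k (n := n)) f
  simpa using this

lemma Top_support {f : HeisCE k n} {p : HeisIdx n} (h : Top k f p ≠ 0) :
    ∃ q, f q ≠ 0 ∧ TAux k q p ≠ 0 := by
  rw [Top_apply, Finset.sum_apply] at h
  obtain ⟨q, -, hq⟩ := Finset.exists_ne_zero_of_sum_ne_zero h
  rw [Pi.smul_apply] at hq
  exact ⟨q, fun hc => hq (by rw [hc, zero_smul]), fun hc => hq (by rw [hc, smul_zero])⟩

lemma TAux_z' {q : HeisIdx n} (h : q.1 = true) : TAux k q = 0 := by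
  rcases q with ⟨b, a⟩
  cases b
  · exact absurd h (by simp)
  · exact TAux_z k a

lemma muAux_struct {p : HeisIdx n} (h : muAux k p ≠ 0) :
    ∃ q' : HeisIdx n, muAux k p = E k q' ∧ q'.1 = false ∧ Good q'.2.1 q'.2.2 ∧
      heisDeg q' = heisDeg p + 2 := by
  rcases p with ⟨b, I, J⟩
  cases b
  case true => exact absurd (muAux_z k _) h
  case false =>
  by_cases hne : (Mset I J).Nonempty
  case neg =>
    exact absurd (by simp [muAux, dif_neg hne]) h
  case pos =>
  rw [muAux_false k I J hne] at h ⊢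
  by_cases hm : t0 I J hne ∈ I
  · rw [if_pos hm] at h; exact absurd rfl h
  rw [if_neg hm]
  have hmJ : t0 I J hne ∉ J := fun hc => hm ((t0_notmem_iff hne).2 hc)
  refine ⟨(false, insert (t0 I J hne) I, insert (t0 I J hne) J), rfl, rfl,
    good_insert hne hm hmJ, ?_⟩
  have h1 := Finset.card_insert_of_notMem hm
  have h2 := Finset.card_insert_of_notMem hmJ
  simp only [heisDeg, if_neg (Bool.false_ne_true)]
  omega

lemma E_mem_chains {q : HeisIdx n} {j : ℕ} (h : heisDeg q = j) :
    E k q ∈ heisChains k n j := by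
  intro p hp
  by_cases hc : p = q
  · exact absurd (hc ▸ h) hp
  · simp [E, Pi.single_apply, hc]

lemma TAux_mem_chains {q : HeisIdx n} {j : ℕ} (h : heisDeg q = j + 2) :
    TAux k q ∈ heisChains k n j := by
  intro p hp
  by_contra hc
  obtain ⟨-, -, hdeg, -⟩ := TAux_support k hc
  omega

lemma TAux_compl (I : Finset (Fin n)) : TAux k ((false, I, Iᶜ) : HeisIdx n) = 0 := by
  rw [TAux_false]
  simp

lemma TAux_compl' {p : HeisIdx n} (hb : p.1 = false) (hm : p.2.2 = p.2.1ᶜ) :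
    TAux k p = 0 := by
  rcases p with ⟨b, I, J⟩
  have hb' : b = false := hb
  subst hb'
  have hm' : J = Iᶜ := hm
  subst hm'
  exact TAux_compl k I

lemma span_bnd [CharP k 2] (j : ℕ) :
    heisBoundaries k n j = Submodule.span k (Set.range (bndFam k (n := n) j)) := by
  apply le_antisymm
  · rintro f ⟨g, hgmem, rfl⟩
    have hTT : Top k (Top k g) = 0 := Top_Top k g
    have hkos := koszul_apply k (Top k g)
    rw [hTT, map_zero, add_zero, Rproj_Top, add_zero] at hkos
    have hD : heisD k n g = zshift k (Top k g) := by
      rw [heisD_eq_comp]; rfl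
    rw [hD, ← hkos]
    rw [muOp_apply, map_sum, map_sum]
    refine Submodule.sum_mem _ fun p _ => ?_
    rw [map_smul, map_smul]
    by_cases hc : Top k g p = 0
    · rw [hc, zero_smul]; exact Submodule.zero_mem _
    obtain ⟨q, hgq, hTq⟩ := Top_support k hc
    have hdegq : heisDeg q = j + 1 := by
      by_contra hd
      exact hgq (hgmem q hd)
    obtain ⟨-, -, hdegp, -⟩ := TAux_support k hTq
    by_cases hmu : muAux k p = 0
    · rw [hmu, map_zero, map_zero, smul_zero]; exact Submodule.zero_mem _
    obtain ⟨q', hEq, hq'1, hq'good, hq'deg⟩ := muAux_struct k hmu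
    have hq'mem : q' ∈ GF n (j + 1) := by
      rw [mem_GF]
      exact ⟨hq'1, hq'good, by omega⟩
    have : zshift k (Top k (muAux k p)) = bndFam k (n := n) j ⟨q', hq'mem⟩ := by
      rw [hEq, show bndFam k (n := n) j ⟨q', hq'mem⟩ = heisD k n (E k q') from rfl,
        heisD_eq_comp]
      rfl
    rw [this]
    exact Submodule.smul_mem _ _ (Submodule.subset_span ⟨⟨q', hq'mem⟩, rfl⟩)
  · rw [Submodule.span_le]
    rintro f ⟨⟨q, hq⟩, rfl⟩
    obtain ⟨-, -, hdeg⟩ := (mem_GF n).1 hq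
    exact ⟨E k q, E_mem_chains k hdeg, rfl⟩

lemma span_cyc [CharP k 2] (j : ℕ) :
    heisCycles k n j = Submodule.span k (Set.range (cycFam k (n := n) j)) := by
  apply le_antisymm
  · rintro f ⟨hker, hchain⟩
    have hTf : Top k f = 0 := Top_eq_zero_of_D k hker
    have hkos := koszul_apply k f
    rw [hTf, map_zero, add_zero] at hkos
    rw [← hkos]
    refine Submodule.add_mem _ ?_ ?_
    · -- Top (μ f) ∈ span
      rw [muOp_apply, map_sum]
      refine Submodule.sum_mem _ fun p _ => ?_
      rw [map_smul]
      by_cases hfp : f p = 0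
      · rw [hfp, zero_smul]; exact Submodule.zero_mem _
      have hdegp : heisDeg p = j := by
        by_contra hd
        exact hfp (hchain p hd)
      by_cases hmu : muAux k p = 0
      · rw [hmu, map_zero, smul_zero]; exact Submodule.zero_mem _
      obtain ⟨q', hEq, hq'1, hq'good, hq'deg⟩ := muAux_struct k hmu
      have hq'mem : q' ∈ GF n (j + 2) := by
        rw [mem_GF]
        exact ⟨hq'1, hq'good, by omega⟩
      have : Top k (muAux k p) = cycFam k (n := n) j (Sum.inr (Sum.inl ⟨q', hq'mem⟩)) := by
        rw [hEq]; rfl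
      rw [this]
      exact Submodule.smul_mem _ _ (Submodule.subset_span ⟨_, rfl⟩)
    · -- Rproj f ∈ span
      rw [eq_sum_single k (Rproj k f)]
      refine Submodule.sum_mem _ fun p _ => ?_
      by_cases hc : Rproj k f p = 0
      · rw [hc, zero_smul]; exact Submodule.zero_mem _
      have hcond : (p.1 = true ∨ p.2.2 = p.2.1ᶜ) ∧ f p ≠ 0 := by
        by_cases hcond : p.1 = true ∨ p.2.2 = p.2.1ᶜ
        · refine ⟨hcond, fun hf => hc ?_⟩
          show (if p.1 = true ∨ p.2.2 = p.2.1ᶜ then f p else 0) = 0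
          rw [if_pos hcond, hf]
        · exact absurd (show Rproj k f p = 0 from if_neg hcond) hc
      have hdegp : heisDeg p = j := by
        by_contra hd
        exact hcond.2 (hchain p hd)
      by_cases hz : p.1 = true
      · have hpmem : p ∈ ZF n j := (mem_ZF n).2 ⟨hz, hdegp⟩
        exact Submodule.smul_mem _ _
          (Submodule.subset_span ⟨Sum.inl ⟨p, hpmem⟩, rfl⟩)
      · have hb : p.1 = false := by
          cases hbb : p.1
          · rfl
          · exact absurd hbb hz
        have hm : p.2.2 = p.2.1ᶜ := hcond.1.resolve_left hz
        have hpmem : p ∈ MF n j := (mem_MF n).2 ⟨hb, hm, hdegp⟩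
        exact Submodule.smul_mem _ _
          (Submodule.subset_span ⟨Sum.inr (Sum.inr ⟨p, hpmem⟩), rfl⟩)
  · rw [Submodule.span_le]
    rintro f ⟨x, rfl⟩
    rcases x with p | q | p
    · obtain ⟨hb, hdeg⟩ := (mem_ZF n).1 p.2
      refine SetLike.mem_coe.2 (Submodule.mem_inf.2 ⟨LinearMap.mem_ker.2 ?_, E_mem_chains k hdeg⟩)
      rw [show cycFam k (n := n) j (Sum.inl p) = E k p.1 from rfl,
        D_single, TAux_z' k hb, map_zero]
    · obtain ⟨hb, hgood, hdeg⟩ := (mem_GF n).1 q.2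
      refine SetLike.mem_coe.2 (Submodule.mem_inf.2 ⟨LinearMap.mem_ker.2 ?_, ?_⟩)
      · rw [show cycFam k (n := n) j (Sum.inr (Sum.inl q)) = Top k (E k q.1) from rfl,
          heisD_eq_comp, LinearMap.comp_apply, Top_Top, map_zero]
      · rw [show cycFam k (n := n) j (Sum.inr (Sum.inl q)) = Top k (E k q.1) from rfl,
          Top_single_one]
        exact TAux_mem_chains k hdeg
    · obtain ⟨hb, hcomp, hdeg⟩ := (mem_MF n).1 p.2
      refine SetLike.mem_coe.2 (Submodule.mem_inf.2 ⟨LinearMap.mem_ker.2 ?_, E_mem_chains k hdeg⟩)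
      rw [show cycFam k (n := n) j (Sum.inr (Sum.inr p)) = E k p.1 from rfl,
        D_single, TAux_compl' k hb hcomp, map_zero]
end Heis

namespace Heis
open Finset
variable {n : ℕ} (k : Type*) [Field k]

lemma finrank_boundaries [CharP k 2] (j : ℕ) :
    Module.finrank k (heisBoundaries k n j) = (GF n (j+1)).card := by
  rw [span_bnd, finrank_span_eq_card (bnd_indep k j), Fintype.card_coe]

lemma finrank_cycles [CharP k 2] (j : ℕ) :
    Module.finrank k (heisCycles k n j)
      = (ZF n j).card + ((GF n (j+2)).card + (MF n j).card) := by
  rw [span_cyc, finrank_span_eq_card (cyc_indep k j), Fintype.card_sum, Fintype.card_sum,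
    Fintype.card_coe, Fintype.card_coe, Fintype.card_coe]

lemma betti_eq [CharP k 2] (j : ℕ) :
    heisBetti k n j = ((ZF n j).card : ℤ) + (GF n (j+2)).card + (MF n j).card
      - (GF n (j+1)).card := by
  unfold heisBetti
  rw [finrank_cycles, finrank_boundaries]
  push_cast
  ring

-- counting
variable (n)

noncomputable def PairF (e : ℕ) : Finset (Finset (Fin n) × Finset (Fin n)) :=
  univ.filter fun w => w.1.card + w.2.card = e

noncomputable def GoodPF (d : ℕ) : Finset (Finset (Fin n) × Finset (Fin n)) :=
  univ.filter fun w => Good w.1 w.2 ∧ w.1.card + w.2.card = d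

lemma heisDeg_false (I J : Finset (Fin n)) :
    heisDeg ((false, I, J) : HeisIdx n) = I.card + J.card := by
  simp [heisDeg]

lemma heisDeg_true (I J : Finset (Fin n)) :
    heisDeg ((true, I, J) : HeisIdx n) = 1 + (I.card + J.card) := by
  simp [heisDeg]; omega

lemma ZF_card_succ (j : ℕ) : (ZF n (j+1)).card = (PairF n j).card := by
  apply Finset.card_bij (fun p _ => p.2)
  · rintro ⟨b, I, J⟩ hp
    obtain ⟨hb, hdeg⟩ := (mem_ZF n).1 hp
    have hb' : b = true := hb
    subst hb'
    rw [heisDeg_true] at hdeg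
    simp only [PairF, mem_filter, mem_univ, true_and]
    omega
  · rintro ⟨b, I, J⟩ hp ⟨b', I', J'⟩ hp' he
    obtain ⟨hb, -⟩ := (mem_ZF n).1 hp
    obtain ⟨hb', -⟩ := (mem_ZF n).1 hp'
    have h1 : b = true := hb
    have h2 : b' = true := hb'
    subst h1; subst h2
    simpa [Prod.ext_iff] using he
  · intro w hw
    simp only [PairF, mem_filter, mem_univ, true_and] at hw
    refine ⟨((true, w.1, w.2) : HeisIdx n), ?_, rfl⟩
    rw [mem_ZF]
    refine ⟨rfl, ?_⟩
    rw [heisDeg_true]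
    omega

lemma ZF_card_zero : (ZF n 0).card = 0 := by
  rw [Finset.card_eq_zero, Finset.eq_empty_iff_forall_notMem]
  rintro ⟨b, I, J⟩ hp
  obtain ⟨hb, hdeg⟩ := (mem_ZF n).1 hp
  have hb' : b = true := hb
  subst hb'
  rw [heisDeg_true] at hdeg
  omega

lemma GF_card (d : ℕ) : (GF n d).card = (GoodPF n d).card := by
  apply Finset.card_bij (fun p _ => p.2)
  · rintro ⟨b, I, J⟩ hp
    obtain ⟨hb, hgood, hdeg⟩ := (mem_GF n).1 hp
    have hb' : b = false := hb
    subst hb'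
    rw [heisDeg_false] at hdeg
    simp only [GoodPF, mem_filter, mem_univ, true_and]
    exact ⟨hgood, hdeg⟩
  · rintro ⟨b, I, J⟩ hp ⟨b', I', J'⟩ hp' he
    obtain ⟨hb, -⟩ := (mem_GF n).1 hp
    obtain ⟨hb', -⟩ := (mem_GF n).1 hp'
    have h1 : b = false := hb
    have h2 : b' = false := hb'
    subst h1; subst h2
    simpa [Prod.ext_iff] using he
  · intro w hw
    simp only [GoodPF, mem_filter, mem_univ, true_and] at hw
    refine ⟨((false, w.1, w.2) : HeisIdx n), ?_, rfl⟩
    rw [mem_GF]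
    exact ⟨rfl, hw.1, by rw [heisDeg_false]; exact hw.2⟩

lemma MF_card (j : ℕ) : (MF n j).card = if j = n then 2^n else 0 := by
  split
  case isTrue hj =>
    rw [hj]
    rw [show (2:ℕ)^n = Fintype.card (Finset (Fin n)) by
      rw [Fintype.card_finset, Fintype.card_fin], ← Finset.card_univ]
    apply Finset.card_bij (fun p _ => p.2.1)
    · intros; exact mem_univ _
    · rintro ⟨b, I, J⟩ hp ⟨b', I', J'⟩ hp' he
      obtain ⟨hb, hco, -⟩ := (mem_MF n).1 hp
      obtain ⟨hb', hco', -⟩ := (mem_MF n).1 hp'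
      have h1 : b = false := hb
      have h2 : b' = false := hb'
      subst h1; subst h2
      have hI : I = I' := he
      subst hI
      have hJ : J = Iᶜ := hco
      have hJ' : J' = Iᶜ := hco'
      simp [Prod.ext_iff, hJ, hJ']
    · intro I _
      refine ⟨((false, I, Iᶜ) : HeisIdx n), ?_, rfl⟩
      rw [mem_MF]
      refine ⟨rfl, rfl, ?_⟩
      rw [heisDeg_false, Finset.card_compl, Fintype.card_fin]
      have hIle : I.card ≤ n := by
        have := Finset.card_le_univ I
        simpa using this
      omega
  case isFalse hj =>
    rw [Finset.card_eq_zero, Finset.eq_empty_iff_forall_notMem]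
    rintro ⟨b, I, J⟩ hp
    obtain ⟨hb, hco, hdeg⟩ := (mem_MF n).1 hp
    have hb' : b = false := hb
    subst hb'
    have hJ : J = Iᶜ := hco
    subst hJ
    rw [heisDeg_false, Finset.card_compl, Fintype.card_fin] at hdeg
    have hIle : I.card ≤ n := by
      have := Finset.card_le_univ I
      simpa using this
    omega

lemma PairF_card (e : ℕ) : (PairF n e).card = (2 * n).choose e := by
  have h2n : Fintype.card (Fin n ⊕ Fin n) = 2 * n := by
    rw [Fintype.card_sum, Fintype.card_fin]; omega
  rw [← h2n, ← Finset.card_univ (α := Fin n ⊕ Fin n)]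
  rw [← Finset.card_powersetCard]
  apply Finset.card_bij (fun w _ => w.1.disjSum w.2)
  · intro w hw
    simp only [PairF, mem_filter, mem_univ, true_and] at hw
    rw [Finset.mem_powersetCard]
    exact ⟨Finset.subset_univ _, by rw [Finset.card_disjSum]; exact hw⟩
  · intro w _ w' _ he
    have h1 : w.1 = w'.1 := by
      ext a
      constructor
      · intro ha
        have h : Sum.inl a ∈ w.1.disjSum w.2 := Finset.inl_mem_disjSum.2 ha
        rw [he] at h
        exact Finset.inl_mem_disjSum.1 h
      · intro ha
        have h : Sum.inl a ∈ w'.1.disjSum w'.2 := Finset.inl_mem_disjSum.2 ha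
        rw [← he] at h
        exact Finset.inl_mem_disjSum.1 h
    have h2 : w.2 = w'.2 := by
      ext a
      constructor
      · intro ha
        have h : Sum.inr a ∈ w.1.disjSum w.2 := Finset.inr_mem_disjSum.2 ha
        rw [he] at h
        exact Finset.inr_mem_disjSum.1 h
      · intro ha
        have h : Sum.inr a ∈ w'.1.disjSum w'.2 := Finset.inr_mem_disjSum.2 ha
        rw [← he] at h
        exact Finset.inr_mem_disjSum.1 h
    exact Prod.ext h1 h2
  · intro u hu
    rw [Finset.mem_powersetCard] at hu
    refine ⟨(u.toLeft, u.toRight), ?_, Finset.toLeft_disjSum_toRight⟩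
    simp only [PairF, mem_filter, mem_univ, true_and]
    have := congrArg Finset.card (Finset.toLeft_disjSum_toRight (u := u))
    rw [Finset.card_disjSum] at this
    rw [this]
    exact hu.2

end Heis

namespace Heis
open Finset
variable {n : ℕ}

lemma Mset_nonempty_of_ne {I J : Finset (Fin n)} (h : J ≠ Iᶜ) : (Mset I J).Nonempty :=
  Finset.nonempty_iff_ne_empty.2 (fun hc => h (Mset_empty_iff.1 hc))

lemma ne_compl_of_nonempty {I J : Finset (Fin n)} (h : (Mset I J).Nonempty) : J ≠ Iᶜ :=
  fun hc => Finset.not_nonempty_empty (Mset_empty_iff.2 hc ▸ h)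

lemma good_ne_compl {I J : Finset (Fin n)} (h : Good I J) : J ≠ Iᶜ :=
  ne_compl_of_nonempty h.1

lemma t0_notMem_of_not_good {I J : Finset (Fin n)} (h : (Mset I J).Nonempty)
    (hng : ¬ Good I J) : t0 I J h ∉ I ∧ t0 I J h ∉ J := by
  have : t0 I J h ∉ I ∩ J := fun hc => hng ⟨h, hc⟩
  constructor
  · intro hI
    exact this (Finset.mem_inter.2 ⟨hI, (t0_notmem_iff h).1 hI⟩)
  · intro hJ
    exact this (Finset.mem_inter.2 ⟨(t0_notmem_iff h).2 hJ, hJ⟩)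

set_option maxHeartbeats 1000000 in
lemma partitionPair (n d : ℕ) :
    (PairF n d).card =
      (if d = n then 2^n else 0) + (GoodPF n d).card + (GoodPF n (d+2)).card := by
  classical
  set A := PairF n d with hA
  have hsplit1 := Finset.card_filter_add_card_filter_not
    (s := A) (p := fun w => w.2 = w.1ᶜ)
  have hsplit2 := Finset.card_filter_add_card_filter_not
    (s := A.filter (fun w => ¬ w.2 = w.1ᶜ)) (p := fun w => Good w.1 w.2)
  -- first part
  have hc1 : (A.filter (fun w => w.2 = w.1ᶜ)).card = if d = n then 2^n else 0 := by
    split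
    case isTrue hd =>
      rw [show (2:ℕ)^n = Fintype.card (Finset (Fin n)) by
        rw [Fintype.card_finset, Fintype.card_fin], ← Finset.card_univ]
      apply Finset.card_bij (fun w _ => w.1)
      · intros; exact mem_univ _
      · rintro ⟨I, J⟩ hw ⟨I', J'⟩ hw' he
        rw [Finset.mem_filter] at hw hw'
        have h1 : J = Iᶜ := hw.2
        have h2 : J' = I'ᶜ := hw'.2
        have h3 : I = I' := he
        subst h3; subst h1; subst h2
        rfl
      · intro I _
        refine ⟨(I, Iᶜ), ?_, rfl⟩
        rw [Finset.mem_filter]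
        refine ⟨?_, rfl⟩
        rw [hA]
        simp only [PairF, mem_filter, mem_univ, true_and]
        rw [Finset.card_compl, Fintype.card_fin]
        have hIle : I.card ≤ n := by
          have := Finset.card_le_univ I
          simpa using this
        omega
    case isFalse hd =>
      rw [Finset.card_eq_zero, Finset.eq_empty_iff_forall_notMem]
      rintro ⟨I, J⟩ hw
      rw [Finset.mem_filter] at hw
      have h1 : J = Iᶜ := hw.2
      subst h1
      have := hw.1
      rw [hA] at this
      simp only [PairF, mem_filter, mem_univ, true_and] at this
      rw [Finset.card_compl, Fintype.card_fin] at this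
      have hIle : I.card ≤ n := by
        have := Finset.card_le_univ I
        simpa using this
      omega
  -- Good part
  have hc2 : ((A.filter (fun w => ¬ w.2 = w.1ᶜ)).filter (fun w => Good w.1 w.2)).card
      = (GoodPF n d).card := by
    congr 1
    ext w
    simp only [Finset.mem_filter, hA, PairF, GoodPF, mem_univ, true_and]
    constructor
    · rintro ⟨⟨hsz, -⟩, hg⟩
      exact ⟨hg, hsz⟩
    · rintro ⟨hg, hsz⟩
      exact ⟨⟨hsz, good_ne_compl hg⟩, hg⟩
  -- non-Good part: bijection with GoodPF (d+2)
  have hc3 : ((A.filter (fun w => ¬ w.2 = w.1ᶜ)).filter (fun w => ¬ Good w.1 w.2)).card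
      = (GoodPF n (d+2)).card := by
    set S := (A.filter (fun w => ¬ w.2 = w.1ᶜ)).filter (fun w => ¬ Good w.1 w.2) with hS
    have hne_of : ∀ w ∈ S, (Mset w.1 w.2).Nonempty := by
      intro w hw
      rw [hS, Finset.mem_filter, Finset.mem_filter] at hw
      exact Mset_nonempty_of_ne hw.1.2
    apply Finset.card_bij (fun w hw =>
      (insert (t0 w.1 w.2 (hne_of w hw)) w.1, insert (t0 w.1 w.2 (hne_of w hw)) w.2))
    · intro w hw
      have h := hne_of w hw
      have hfacts := hw
      rw [hS, Finset.mem_filter, Finset.mem_filter] at hfacts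
      obtain ⟨⟨hmem, hnc⟩, hng⟩ := hfacts
      rw [hA] at hmem
      simp only [PairF, mem_filter, mem_univ, true_and] at hmem
      obtain ⟨ht1, ht2⟩ := t0_notMem_of_not_good h hng
      simp only [GoodPF, mem_filter, mem_univ, true_and]
      refine ⟨good_insert h ht1 ht2, ?_⟩
      rw [Finset.card_insert_of_notMem ht1, Finset.card_insert_of_notMem ht2]
      omega
    · intro w hw w' hw' he
      have h := hne_of w hw
      have h' := hne_of w' hw'
      have hfacts := hw
      rw [hS, Finset.mem_filter, Finset.mem_filter] at hfacts
      obtain ⟨⟨-, -⟩, hng⟩ := hfacts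
      have hfacts' := hw'
      rw [hS, Finset.mem_filter, Finset.mem_filter] at hfacts'
      obtain ⟨⟨-, -⟩, hng'⟩ := hfacts'
      obtain ⟨ht1, ht2⟩ := t0_notMem_of_not_good h hng
      obtain ⟨ht1', ht2'⟩ := t0_notMem_of_not_good h' hng'
      simp only [Prod.mk.injEq] at he
      obtain ⟨he1, he2⟩ := he
      have hMeq : Mset w.1 w.2 = Mset w'.1 w'.2 := by
        rw [← Mset_insert ht1 ht2, ← Mset_insert ht1' ht2', he1, he2]
      have ht0eq : t0 w.1 w.2 h = t0 w'.1 w'.2 h' := by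
        rw [t0_congr hMeq h]
      apply Prod.ext
      · rw [← Finset.erase_insert ht1, ← Finset.erase_insert ht1', he1, ht0eq]
      · rw [← Finset.erase_insert ht2, ← Finset.erase_insert ht2', he2, ht0eq]
    · intro v hv
      simp only [GoodPF, mem_filter, mem_univ, true_and] at hv
      obtain ⟨hg, hsz⟩ := hv
      obtain ⟨h', ht'⟩ := id hg
      rw [Finset.mem_inter] at ht'
      set t' := t0 v.1 v.2 h' with ht'def
      have hMeq : Mset (v.1.erase t') (v.2.erase t') = Mset v.1 v.2 :=
        Mset_erase ht'.1 ht'.2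
      have hwne : (Mset (v.1.erase t') (v.2.erase t')).Nonempty := by rw [hMeq]; exact h'
      have ht0w : t0 (v.1.erase t') (v.2.erase t') hwne = t' := by
        rw [t0_congr hMeq hwne]
      have hwS : (v.1.erase t', v.2.erase t') ∈ S := by
        rw [hS, Finset.mem_filter, Finset.mem_filter]
        refine ⟨⟨?_, ne_compl_of_nonempty hwne⟩, ?_⟩
        · rw [hA]
          simp only [PairF, mem_filter, mem_univ, true_and]
          rw [Finset.card_erase_of_mem ht'.1, Finset.card_erase_of_mem ht'.2]
          have h1 : 1 ≤ v.1.card := Finset.card_pos.2 ⟨t', ht'.1⟩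
          have h2 : 1 ≤ v.2.card := Finset.card_pos.2 ⟨t', ht'.2⟩
          omega
        · intro hgw
          obtain ⟨hw', htw⟩ := hgw
          have : t0 (v.1.erase t') (v.2.erase t') hw' = t' := ht0w
          rw [this] at htw
          exact Finset.notMem_erase t' v.1 (Finset.mem_inter.1 htw).1
      refine ⟨(v.1.erase t', v.2.erase t'), hwS, ?_⟩
      have ht0w' : t0 (v.1.erase t') (v.2.erase t') (hne_of _ hwS) = t' := ht0w
      rw [ht0w']
      rw [Finset.insert_erase ht'.1, Finset.insert_erase ht'.2]
  omega

lemma GoodPF_card_le_one {d : ℕ} (hd : d ≤ 1) : (GoodPF n d).card = 0 := by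
  rw [Finset.card_eq_zero, Finset.eq_empty_iff_forall_notMem]
  intro w hw
  simp only [GoodPF, mem_filter, mem_univ, true_and] at hw
  obtain ⟨⟨h, ht⟩, hsz⟩ := hw
  rw [Finset.mem_inter] at ht
  have h1 : 1 ≤ w.1.card := Finset.card_pos.2 ⟨_, ht.1⟩
  have h2 : 1 ≤ w.2.card := Finset.card_pos.2 ⟨_, ht.2⟩
  omega

lemma PairF_card_gt (e : ℕ) (he : 2 * n < e) : (PairF n e).card = 0 := by
  rw [PairF_card]
  exact Nat.choose_eq_zero_of_lt he

lemma GoodPF_card_gt (d : ℕ) (hd : 2 * n < d) : (GoodPF n d).card = 0 := by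
  rw [Finset.card_eq_zero, Finset.eq_empty_iff_forall_notMem]
  intro w hw
  simp only [GoodPF, mem_filter, mem_univ, true_and] at hw
  have h1 : w.1.card ≤ n := by
    have := Finset.card_le_univ w.1
    simpa using this
  have h2 : w.2.card ≤ n := by
    have := Finset.card_le_univ w.2
    simpa using this
  omega

end Heis

namespace Heis
open Finset Polynomial

lemma betti_int (k : Type*) [Field k] [CharP k 2] (n j : ℕ) :
    heisBetti k n j = ((ZF n j).card : ℤ) + ((GoodPF n (j+2)).card : ℤ)
      + (if j = n then (2:ℤ)^n else 0) - ((GoodPF n (j+1)).card : ℤ) := by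
  rw [betti_eq, GF_card, GF_card, MF_card]
  split_ifs <;> push_cast <;> ring

lemma betti_vanish (k : Type*) [Field k] [CharP k 2] (n i : ℕ) (hi : 2*n+2 ≤ i) :
    heisBetti k n i = 0 := by
  obtain ⟨j, rfl⟩ : ∃ j, i = j + 1 := ⟨i - 1, by omega⟩
  rw [betti_int]
  rw [ZF_card_succ, PairF_card, Nat.choose_eq_zero_of_lt (by omega),
    GoodPF_card_gt _ (by omega), GoodPF_card_gt _ (by omega), if_neg (by omega)]
  simp

lemma gi_zero (n : ℕ) : ((GoodPF n 0).card : ℤ) = 0 := by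
  rw [GoodPF_card_le_one (by omega)]; simp

lemma gi_one (n : ℕ) : ((GoodPF n 1).card : ℤ) = 0 := by
  rw [GoodPF_card_le_one (by omega)]; simp

lemma poly_id (k : Type*) [Field k] [CharP k 2] (n : ℕ) :
    (1 + X ^ 2 : ℤ[X]) *
        ∑ i ∈ Finset.range (2 * n + 2), Polynomial.C (heisBetti k n i) * X ^ i =
      (1 + X ^ 3) * (1 + X) ^ (2 * n) + (X + X ^ 2) * (2 * X) ^ n := by
  set P : ℤ[X] := ∑ i ∈ Finset.range (2 * n + 2), Polynomial.C (heisBetti k n i) * X ^ i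
    with hP
  set g : ℤ[X] := ∑ d ∈ Finset.range (2 * n + 4), Polynomial.C ((GoodPF n d).card : ℤ) * X ^ d
    with hg
  have hbin : ((1 + X : ℤ[X]) ^ (2 * n)) =
      ∑ j ∈ Finset.range (2 * n + 1), Polynomial.C (((2*n).choose j : ℤ)) * X ^ j := by
    rw [add_comm, add_pow]
    refine Finset.sum_congr rfl fun j hj => ?_
    rw [one_pow, mul_one, map_natCast, mul_comm]
  have hgt1 : Polynomial.C (((GoodPF n (2*n+2)).card : ℤ)) = 0 := by
    rw [GoodPF_card_gt _ (by omega)]; simp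
  have hgt2 : Polynomial.C (((GoodPF n (2*n+3)).card : ℤ)) = 0 := by
    rw [GoodPF_card_gt _ (by omega)]; simp
  -- three re-summations of g
  have hgsum0 : ∑ d ∈ Finset.range (2 * n + 2),
      Polynomial.C ((GoodPF n d).card : ℤ) * X ^ d = g := by
    symm
    rw [hg, Finset.sum_range_succ, Finset.sum_range_succ, hgt1, hgt2]
    ring
  have hgsum1 : ∑ i ∈ Finset.range (2 * n + 2),
      Polynomial.C ((GoodPF n (i+1)).card : ℤ) * X ^ (i+1) = g := by
    symm
    rw [hg, Finset.sum_range_succ' _ (2*n+3), Finset.sum_range_succ _ (2*n+2)]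
    rw [show (2*n+2+1) = 2*n+3 by omega, hgt2, gi_zero]
    simp
  have hgsum2 : ∑ i ∈ Finset.range (2 * n + 2),
      Polynomial.C ((GoodPF n (i+2)).card : ℤ) * X ^ (i+2) = g := by
    symm
    rw [hg, Finset.sum_range_succ' _ (2*n+3), Finset.sum_range_succ' _ (2*n+2)]
    rw [gi_zero]
    rw [show (0+1) = 1 by omega, gi_one]
    simp
  -- the M-sum
  have hmsum : ∑ i ∈ Finset.range (2 * n + 2),
      (if i = n then Polynomial.C ((2:ℤ)^n) else 0) * X ^ (i+2) = X^2 * (2*X)^n := by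
    rw [Finset.sum_eq_single n]
    · rw [if_pos rfl]
      rw [mul_pow]
      rw [show ((2:ℤ[X]))^n = Polynomial.C ((2:ℤ)^n) by
        rw [map_pow]; norm_num]
      ring
    · intro i _ hne
      rw [if_neg hne, zero_mul]
    · intro hn
      exact absurd (Finset.mem_range.2 (by omega)) hn
  -- the Z-sum
  have hzsum : ∑ i ∈ Finset.range (2 * n + 2),
      Polynomial.C ((ZF n i).card : ℤ) * X ^ (i+2) = X^3 * (1+X)^(2*n) := by
    rw [Finset.sum_range_succ' _ (2*n+1)]
    rw [show ((ZF n 0).card : ℤ) = 0 by rw [ZF_card_zero]; simp]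
    rw [hbin, Finset.mul_sum]
    simp only [map_zero, zero_mul, add_zero]
    refine Finset.sum_congr rfl fun j hj => ?_
    rw [ZF_card_succ, PairF_card]
    ring
  -- recursion key
  have key2 : X^2*g + g + X^2*(2*X)^n = X^2*(1+X)^(2*n) := by
    have lhs_eq : X^2*g + g + X^2*(2*X)^n
        = ∑ d ∈ Finset.range (2 * n + 2),
            (Polynomial.C ((GoodPF n d).card : ℤ) + Polynomial.C ((GoodPF n (d+2)).card : ℤ)
              + (if d = n then Polynomial.C ((2:ℤ)^n) else 0)) * X ^ (d+2) := by
      nth_rewrite 2 [← hgsum2]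
      rw [← hgsum0, ← hmsum]
      rw [Finset.mul_sum, ← Finset.sum_add_distrib, ← Finset.sum_add_distrib]
      refine Finset.sum_congr rfl fun d _ => ?_
      ring
    rw [lhs_eq]
    have rhs_eq : ∑ d ∈ Finset.range (2 * n + 2),
        Polynomial.C (((2*n).choose d : ℤ)) * X ^ (d+2) = (X:ℤ[X])^2*(1+X)^(2*n) := by
      rw [Finset.sum_range_succ,
        show ((2*n).choose (2*n+1)) = 0 from Nat.choose_eq_zero_of_lt (by omega)]
      rw [hbin, Finset.mul_sum]
      simp only [Nat.cast_zero, map_zero, zero_mul, add_zero]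
      refine Finset.sum_congr rfl fun d _ => ?_
      ring
    rw [← rhs_eq]
    refine Finset.sum_congr rfl fun d _ => ?_
    congr 1
    have hrec := partitionPair n d
    rw [PairF_card] at hrec
    have : ((GoodPF n d).card : ℤ) + ((GoodPF n (d+2)).card : ℤ)
        + (if d = n then (2:ℤ)^n else 0) = (((2*n).choose d : ℤ)) := by
      split_ifs with hd
      · rw [hrec, if_pos hd]; push_cast; ring
      · rw [hrec, if_neg hd]; push_cast; ring
    rw [← this]
    split_ifs <;> simp [map_add]
  -- E1
  have key1 : X^2*P = X^3*(1+X)^(2*n) + g - X*g + X^2*(2*X)^n := by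
    rw [hP, Finset.mul_sum]
    have step : ∀ i ∈ Finset.range (2*n+2),
        X^2 * (Polynomial.C (heisBetti k n i) * X ^ i)
          = Polynomial.C ((ZF n i).card : ℤ) * X^(i+2)
            + Polynomial.C ((GoodPF n (i+2)).card : ℤ) * X^(i+2)
            + (if i = n then Polynomial.C ((2:ℤ)^n) else 0) * X^(i+2)
            - X * (Polynomial.C ((GoodPF n (i+1)).card : ℤ) * X^(i+1)) := by
      intro i _
      rw [betti_int k n i]
      have : Polynomial.C (((ZF n i).card : ℤ) + ((GoodPF n (i+2)).card : ℤ)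
          + (if i = n then (2:ℤ)^n else 0) - ((GoodPF n (i+1)).card : ℤ))
          = Polynomial.C ((ZF n i).card : ℤ) + Polynomial.C ((GoodPF n (i+2)).card : ℤ)
            + (if i = n then Polynomial.C ((2:ℤ)^n) else 0)
            - Polynomial.C ((GoodPF n (i+1)).card : ℤ) := by
        split_ifs <;> simp [map_add, map_sub]
      rw [this]
      ring
    rw [Finset.sum_congr rfl step]
    rw [Finset.sum_sub_distrib, Finset.sum_add_distrib, Finset.sum_add_distrib]
    rw [hzsum, hgsum2, hmsum, ← Finset.mul_sum, hgsum1]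
    ring
  -- final algebra
  have hX2 : ((X:ℤ[X])^2) ≠ 0 := pow_ne_zero _ Polynomial.X_ne_zero
  apply mul_left_cancel₀ hX2
  linear_combination (1+X^2) * key1 + (1-X) * key2

end Heis

/-- For a field `k` of characteristic `2` and the Chevalley–Eilenberg differential `d`
of the Heisenberg Lie algebra on `Λ^• V`, `V = k^{2n+1}`: one has `d ∘ d = 0`, and the
Betti numbers `b_i = dim ker(d : Λ^i V → Λ^{i-1} V) − dim im(d : Λ^{i+1} V → Λ^i V)`
satisfy `(1 + t^2) · Σ_{i ≥ 0} b_i t^i = (1+t^3)(1+t)^{2n} + (t+t^2)(2t)^n` in `ℤ[t]`.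
(The `b_i` vanish in degrees above `2n+1`, so the sum is the stated finite one.) -/
theorem heisenberg_CE_dd_zero_and_betti (k : Type*) [Field k] [CharP k 2] (n : ℕ) :
    heisD k n ∘ₗ heisD k n = 0 ∧
    (∀ i, 2 * n + 2 ≤ i → heisBetti k n i = 0) ∧
    (1 + X ^ 2 : ℤ[X]) *
        ∑ i ∈ Finset.range (2 * n + 2), Polynomial.C (heisBetti k n i) * X ^ i =
      (1 + X ^ 3) * (1 + X) ^ (2 * n) + (X + X ^ 2) * (2 * X) ^ n := by
  exact ⟨Heis.heisD_comp_heisD k, fun i hi => Heis.betti_vanish k n i hi, Heis.poly_id k n⟩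
end
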